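/- There exist infinitely many integers g ≥ 2 such that M(g) = 4(g − 1). In particular, for every prime p with p > 6 and gcd((p − 1)/2, 6) = 1 (equivalently, every prime p of the form 12k − 1), setting g = p + 1 gives M(g) = 4(g − 1) = 4p, and by Dirichlet's theorem there are infinitely many such primes. -/

import Mathlib

open scoped Classical

/-- A finite connected multigraph without loop edges. -/
structure Multigraph where
  V : Type
  E : Type
  [fintypeV : Fintype V]
  [fintypeE : Fintype E]
  ends : E → Sym2 V
  loopless : ∀ e : E, ¬ (ends e).IsDiag
  connected : (SimpleGraph.fromRel fun x y : V => ∃ e : E, ends e = s(x, y)).Connected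

attribute [instance] Multigraph.fintypeV Multigraph.fintypeE

namespace Multigraph

/-- The genus (first Betti number, cyclomatic number) of a multigraph. -/
def genus (G : Multigraph) : ℤ :=
  (Fintype.card G.E : ℤ) - (Fintype.card G.V : ℤ) + 1

/-- A cycle in a multigraph, given as a nonempty set of edges such that every vertex is
incident to either 0 or 2 of its edges. -/
def IsCycleSet (G : Multigraph) (C : Set G.E) : Prop :=
  C.Nonempty ∧ ∀ x : G.V,
    Nat.card {e : G.E // e ∈ C ∧ x ∈ G.ends e} = 0 ∨
    Nat.card {e : G.E // e ∈ C ∧ x ∈ G.ends e} = 2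

end Multigraph

/-- A morphism of multigraphs: vertices go to vertices, and each edge goes either to an
edge joining the images of its endpoints, or to the common image of its endpoints
(in which case the edge is *vertical*). -/
structure Morphism (G G' : Multigraph) where
  vmap : G.V → G'.V
  emap : G.E → G'.E ⊕ G'.V
  compat : ∀ e : G.E,
    (∀ e', emap e = Sum.inl e' → G'.ends e' = (G.ends e).map vmap) ∧
    (∀ v, emap e = Sum.inr v → (G.ends e).map vmap = Sym2.diag v)

namespace Morphism

/-- A morphism is harmonic if for every vertex `x`, the number of edges incident to `x`
mapping to a given edge `e'` incident to `φ(x)` is independent of the choice of `e'`. -/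
def Harmonic {G G' : Multigraph} (φ : Morphism G G') : Prop :=
  ∀ (x : G.V) (e₁ e₂ : G'.E), φ.vmap x ∈ G'.ends e₁ → φ.vmap x ∈ G'.ends e₂ →
    Nat.card {e : G.E // x ∈ G.ends e ∧ φ.emap e = Sum.inl e₁} =
    Nat.card {e : G.E // x ∈ G.ends e ∧ φ.emap e = Sum.inl e₂}

/-- A morphism is nonconstant if its image is not a single vertex. -/
def Nonconstant {G G' : Multigraph} (φ : Morphism G G') : Prop :=
  ∃ x y : G.V, φ.vmap x ≠ φ.vmap y

/-- Composition of morphisms of multigraphs. -/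
def comp {G₁ G₂ G₃ : Multigraph} (ψ : Morphism G₂ G₃) (φ : Morphism G₁ G₂) :
    Morphism G₁ G₃ where
  vmap := ψ.vmap ∘ φ.vmap
  emap e := Sum.elim ψ.emap (fun v => Sum.inr (ψ.vmap v)) (φ.emap e)
  compat e := by
    constructor
    · intro e'' h
      rcases hφ : φ.emap e with e' | v
      · simp only [hφ, Sum.elim_inl] at h
        have h1 := (φ.compat e).1 e' hφ
        have h2 := (ψ.compat e').1 e'' h
        rw [h2, h1, Sym2.map_map]
      · simp only [hφ, Sum.elim_inr] at h
        simp at h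
    · intro v h
      rcases hφ : φ.emap e with e' | v₀
      · simp only [hφ, Sum.elim_inl] at h
        have h1 := (φ.compat e).1 e' hφ
        have h2 := (ψ.compat e').2 v h
        rw [← Sym2.map_map, ← h1]
        exact h2
      · simp only [hφ, Sum.elim_inr, Sum.inr.injEq] at h
        have h1 := (φ.compat e).2 v₀ hφ
        subst h
        rw [← Sym2.map_map, h1]
        rfl
end Morphism

/-- A group of automorphisms of a multigraph `G` (a faithful action of `Γ` on `G` by
automorphisms, i.e. a subgroup of `Aut(G)`). -/
structure GraphAction (Γ : Type) [Group Γ] (G : Multigraph) where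
  actV : Γ →* Equiv.Perm G.V
  actE : Γ →* Equiv.Perm G.E
  ends_map : ∀ (γ : Γ) (e : G.E), G.ends (actE γ e) = (G.ends e).map (actV γ)
  faithful : ∀ γ : Γ, (∀ x : G.V, actV γ x = x) → (∀ e : G.E, actE γ e = e) → γ = 1

namespace GraphAction

variable {Γ : Type} [Group Γ] {G : Multigraph}

/-- Two vertices lie in the same `Δ`-orbit. -/
def vrel (A : GraphAction Γ G) (Δ : Subgroup Γ) (x y : G.V) : Prop :=
  ∃ δ ∈ Δ, A.actV δ x = y

/-- Two edges lie in the same `Δ`-orbit. -/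
def erel (A : GraphAction Γ G) (Δ : Subgroup Γ) (e f : G.E) : Prop :=
  ∃ δ ∈ Δ, A.actE δ e = f

/-- The setoid of `Δ`-orbits of vertices. -/
def vSetoid (A : GraphAction Γ G) (Δ : Subgroup Γ) : Setoid G.V where
  r := A.vrel Δ
  iseqv := by
    constructor
    · intro x; exact ⟨1, Δ.one_mem, by simp⟩
    · rintro x y ⟨δ, hδ, h⟩
      refine ⟨δ⁻¹, Δ.inv_mem hδ, ?_⟩
      rw [map_inv, ← h]
      exact (A.actV δ).symm_apply_apply x
    · rintro x y z ⟨δ₁, h1, e1⟩ ⟨δ₂, h2, e2⟩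
      refine ⟨δ₂ * δ₁, Δ.mul_mem h2 h1, ?_⟩
      rw [map_mul]
      simp [Equiv.Perm.mul_apply, e1, e2]

/-- The setoid of `Δ`-orbits of edges. -/
def eSetoid (A : GraphAction Γ G) (Δ : Subgroup Γ) : Setoid G.E where
  r := A.erel Δ
  iseqv := by
    constructor
    · intro e; exact ⟨1, Δ.one_mem, by simp⟩
    · rintro e f ⟨δ, hδ, h⟩
      refine ⟨δ⁻¹, Δ.inv_mem hδ, ?_⟩
      rw [map_inv, ← h]
      exact (A.actE δ).symm_apply_apply e
    · rintro e f k ⟨δ₁, h1, e1⟩ ⟨δ₂, h2, e2⟩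
      refine ⟨δ₂ * δ₁, Δ.mul_mem h2 h1, ?_⟩
      rw [map_mul]
      simp [Equiv.Perm.mul_apply, e1, e2]

/-- An edge is `Δ`-vertical if its two endpoints lie in the same `Δ`-orbit (so it is
contracted by the quotient morphism `G → G/Δ`). -/
def Vertical (A : GraphAction Γ G) (Δ : Subgroup Γ) (e : G.E) : Prop :=
  ∃ x y : G.V, G.ends e = s(x, y) ∧ A.vrel Δ x y

/-- The vertex set of the quotient graph `G/Δ`: the `Δ`-orbits of vertices. -/
abbrev quotV (A : GraphAction Γ G) (Δ : Subgroup Γ) : Type :=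
  Quotient (A.vSetoid Δ)

/-- The edge set of the quotient graph `G/Δ`: the `Δ`-orbits of non-vertical edges. -/
abbrev quotE (A : GraphAction Γ G) (Δ : Subgroup Γ) : Type :=
  Quotient ((A.eSetoid Δ).comap (Subtype.val : {e : G.E // ¬ A.Vertical Δ e} → G.E))

/-- The genus of the quotient graph `G/Δ`. -/
noncomputable def quotGenus (A : GraphAction Γ G) (Δ : Subgroup Γ) : ℤ :=
  (Nat.card (A.quotE Δ) : ℤ) - (Nat.card (A.quotV Δ) : ℤ) + 1

/-- The order of the stabilizer `Δ_x` of a vertex `x`. -/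
noncomputable def stabOrder (A : GraphAction Γ G) (Δ : Subgroup Γ) (x : G.V) : ℕ :=
  Nat.card {γ : Γ // γ ∈ Δ ∧ A.actV γ x = x}

/-- The vertical multiplicity of a vertex `x`: the number of `Δ`-vertical edges
incident to `x`. -/
noncomputable def vertMult (A : GraphAction Γ G) (Δ : Subgroup Γ) (x : G.V) : ℕ :=
  Nat.card {e : G.E // x ∈ G.ends e ∧ A.Vertical Δ e}

/-- `r_y = |Δ_x|` for a vertex `y` of the quotient `G/Δ` and any `x` in the fiber over `y`. -/
noncomputable def r (A : GraphAction Γ G) (Δ : Subgroup Γ) (y : A.quotV Δ) : ℕ :=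
  A.stabOrder Δ (Quotient.out y)

/-- `w_y = v(x)/|Δ_x|` for a vertex `y` of the quotient `G/Δ` and any `x` in the fiber. -/
noncomputable def w (A : GraphAction Γ G) (Δ : Subgroup Γ) (y : A.quotV Δ) : ℕ :=
  A.vertMult Δ (Quotient.out y) / A.r Δ y

/-- The ramification number `R = Σ_y [2(1 - 1/r_y) + w_y]` of the quotient map `G → G/Δ`. -/
noncomputable def ram (A : GraphAction Γ G) (Δ : Subgroup Γ) : ℚ :=
  ∑ᶠ y : A.quotV Δ, (2 * (1 - 1 / (A.r Δ y : ℚ)) + (A.w Δ y : ℚ))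

/-- A vertex `y` of the quotient `G/Δ` is a branch point if `2(1 - 1/r_y) + w_y > 0`. -/
def IsBranch (A : GraphAction Γ G) (Δ : Subgroup Γ) (y : A.quotV Δ) : Prop :=
  0 < 2 * (1 - 1 / (A.r Δ y : ℚ)) + (A.w Δ y : ℚ)

/-- The quotient morphism `φ_Δ : G → G/Δ` is harmonic: for every vertex `x` of `G` and
every pair of quotient edges incident to the image of `x`, the numbers of preimages
incident to `x` agree. -/
def QuotHarmonic (A : GraphAction Γ G) (Δ : Subgroup Γ) : Prop :=
  ∀ (x : G.V) (e₁ e₂ : G.E), ¬ A.Vertical Δ e₁ → ¬ A.Vertical Δ e₂ →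
    (∃ v ∈ G.ends e₁, A.vrel Δ x v) → (∃ v ∈ G.ends e₂, A.vrel Δ x v) →
    Nat.card {e : G.E // x ∈ G.ends e ∧ A.erel Δ e e₁} =
    Nat.card {e : G.E // x ∈ G.ends e ∧ A.erel Δ e e₂}

/-- The quotient morphism `φ_Δ : G → G/Δ` is non-degenerate: no neighborhood `x(1)` is
contracted to a vertex, i.e. every vertex has a neighbor outside its `Δ`-orbit. -/
def QuotNondeg (A : GraphAction Γ G) (Δ : Subgroup Γ) : Prop :=
  ∀ x : G.V, ∃ e : G.E, x ∈ G.ends e ∧ ∃ y ∈ G.ends e, ¬ A.vrel Δ x y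

/-- `Γ` acts harmonically on `G` if for every subgroup `Δ ≤ Γ` the quotient morphism
`φ_Δ : G → G/Δ` is harmonic and non-degenerate. -/
def ActsHarmonically (A : GraphAction Γ G) : Prop :=
  ∀ Δ : Subgroup Γ, A.QuotHarmonic Δ ∧ A.QuotNondeg Δ

/-- The quotient map `G → G/Δ` is horizontally unramified: all vertex stabilizers in `Δ`
are trivial. -/
def HorizUnramified (A : GraphAction Γ G) (Δ : Subgroup Γ) : Prop :=
  ∀ (x : G.V) (γ : Γ), γ ∈ Δ → A.actV γ x = x → γ = 1

end GraphAction

/-- `M g` is the maximal order of a group acting harmonically on a graph of genus `g`. -/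
noncomputable def M (g : ℕ) : ℕ :=
  sSup {n : ℕ | ∃ (Γ : Type) (i : Group Γ) (G : Multigraph) (A : @GraphAction Γ i G),
    @GraphAction.ActsHarmonically Γ i G A ∧ G.genus = (g : ℤ) ∧ Nat.card Γ = n}

section Counting

open Function

variable {α : Type} {β : Type}

lemma card_eq_sum_fibers [Fintype α] [Fintype β] (f : α → β) :
    Nat.card α = ∑ b : β, Nat.card {a // f a = b} := by
  rw [Nat.card_eq_fintype_card, ← Fintype.card_congr (Equiv.sigmaFiberEquiv f),
    Fintype.card_sigma]
  simp [Nat.card_eq_fintype_card]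

variable {H : Type} [Group H] [Fintype H] [Fintype α]

lemma orbit_mul_stab (f : H →* Equiv.Perm α) (x : α) :
    Nat.card {y : α // ∃ h : H, f h x = y} * Nat.card {h : H // f h x = x} = Nat.card H := by
  letI : MulAction H α := MulAction.compHom α f
  have horb : {y : α | ∃ h : H, f h x = y} = MulAction.orbit H x := by
    ext y
    simp [MulAction.mem_orbit_iff]
    rfl
  have hstab : {h : H | f h x = x} = (MulAction.stabilizer H x : Set H) := by
    ext h
    simp [MulAction.mem_stabilizer_iff]
    rfl
  have e1 : {y : α // ∃ h : H, f h x = y} ≃ MulAction.orbit H x :=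
    Equiv.setCongr horb
  have e2 : {h : H // f h x = x} ≃ MulAction.stabilizer H x :=
    Equiv.setCongr hstab
  rw [Nat.card_congr e1, Nat.card_congr e2]
  simp only [Nat.card_eq_fintype_card]
  exact MulAction.card_orbit_mul_card_stabilizer_eq_card_group H x

lemma card_stab_one (f : H →* Equiv.Perm α) (x : α)
    (hfree : ∀ h : H, f h x = x → h = 1) :
    Nat.card {h : H // f h x = x} = 1 := by
  have : Nonempty {h : H // f h x = x} := ⟨⟨1, by simp⟩⟩
  have : Subsingleton {h : H // f h x = x} :=
    ⟨fun a b => Subtype.ext ((hfree a a.2).trans (hfree b b.2).symm)⟩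
  exact Nat.card_eq_one_iff_unique.mpr ⟨‹_›, ‹_›⟩

lemma orbit_card_of_free (f : H →* Equiv.Perm α) (x : α)
    (hfree : ∀ h : H, f h x = x → h = 1) :
    Nat.card {y : α // ∃ h : H, f h x = y} = Nat.card H := by
  have := orbit_mul_stab f x
  rwa [card_stab_one f x hfree, mul_one] at this

lemma card_dvd_of_free (f : H →* Equiv.Perm α)
    (hfree : ∀ (h : H) (a : α), f h a = a → h = 1) :
    Nat.card H ∣ Nat.card α := by
  letI : MulAction H α := MulAction.compHom α f
  letI S : Setoid α := MulAction.orbitRel H α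
  have key : ∀ q : Quotient S, Nat.card {a // Quotient.mk S a = q} = Nat.card H := by
    intro q
    have hiff : ∀ a : α, (Quotient.mk S a = q) ↔ ∃ h : H, f h q.out = a := by
      intro a
      constructor
      · intro h
        have h2 : a ≈ q.out := Quotient.exact (h.trans (Quotient.out_eq q).symm)
        have h3 : a ∈ MulAction.orbit H q.out := h2
        obtain ⟨g, hg⟩ := h3
        exact ⟨g, hg⟩
      · rintro ⟨g, hg⟩
        exact (Quotient.sound (show a ∈ MulAction.orbit H q.out from ⟨g, hg⟩)).trans
          (Quotient.out_eq q)
    rw [Nat.card_congr (Equiv.subtypeEquivRight hiff),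
      orbit_card_of_free f q.out (fun h hh => hfree h _ hh)]
  rw [card_eq_sum_fibers (Quotient.mk S)]
  simp only [key]
  exact ⟨Fintype.card (Quotient S), by rw [Finset.sum_const, smul_eq_mul, Nat.mul_comm]; simp⟩

end Counting
namespace GraphAction

variable {Γ : Type} [Group Γ] {G : Multigraph}

lemma finite_gamma (A : GraphAction Γ G) : Finite Γ := by
  have hinj : Function.Injective (fun γ : Γ => (A.actV γ, A.actE γ)) := by
    intro γ δ h
    simp only [Prod.mk.injEq] at h
    have h1 : A.actV (δ⁻¹ * γ) = 1 := by rw [map_mul, map_inv, h.1]; group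
    have h2 : A.actE (δ⁻¹ * γ) = 1 := by rw [map_mul, map_inv, h.2]; group
    have := A.faithful (δ⁻¹ * γ) (fun x => by rw [h1]; rfl) (fun e => by rw [h2]; rfl)
    exact (inv_mul_eq_one.mp this).symm
  exact Finite.of_injective _ hinj

variable (A : GraphAction Γ G)

lemma actV_inv_actV (γ : Γ) (x : G.V) : A.actV γ⁻¹ (A.actV γ x) = x := by
  rw [← Equiv.Perm.mul_apply, ← map_mul, inv_mul_cancel, map_one, Equiv.Perm.one_apply]

lemma actE_inv_actE (γ : Γ) (e : G.E) : A.actE γ⁻¹ (A.actE γ e) = e := by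
  rw [← Equiv.Perm.mul_apply, ← map_mul, inv_mul_cancel, map_one, Equiv.Perm.one_apply]

lemma mem_ends_act {γ : Γ} {x : G.V} {e : G.E} (h : x ∈ G.ends e) :
    A.actV γ x ∈ G.ends (A.actE γ e) := by
  rw [A.ends_map, Sym2.mem_map]
  exact ⟨x, h, rfl⟩

lemma actV_fix_of_mem_zpowers {γ δ : Γ} {x : G.V} (hx : A.actV γ x = x)
    (hδ : δ ∈ Subgroup.zpowers γ) : A.actV δ x = x := by
  obtain ⟨k, rfl⟩ := hδ
  rw [map_zpow]
  exact Function.IsFixedPt.perm_zpow hx k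

lemma actE_fix_of_mem_zpowers {γ δ : Γ} {e : G.E} (he : A.actE γ e = e)
    (hδ : δ ∈ Subgroup.zpowers γ) : A.actE δ e = e := by
  obtain ⟨k, rfl⟩ := hδ
  rw [map_zpow]
  exact Function.IsFixedPt.perm_zpow he k

/-- If `γ` fixes `x`, any edge at `x` is non-vertical for `⟨γ⟩`. -/
lemma not_vertical_of_fix {γ : Γ} {x : G.V} (hx : A.actV γ x = x)
    {f : G.E} (hf : x ∈ G.ends f) : ¬ A.Vertical (Subgroup.zpowers γ) f := by
  rintro ⟨a, b, hab, δ, hδ, hba⟩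
  have hd : a ≠ b := fun h => G.loopless f (by rw [hab]; exact Sym2.mk_isDiag_iff.mpr h)
  have hmem : x = a ∨ x = b := Sym2.mem_iff.mp (by rw [← hab]; exact hf)
  rcases hmem with rfl | rfl
  · exact hd (by rw [← hba, A.actV_fix_of_mem_zpowers hx hδ])
  · refine hd ?_
    have h1 := congrArg (A.actV δ⁻¹) hba
    rw [A.actV_inv_actV] at h1
    rw [h1, A.actV_fix_of_mem_zpowers hx ((Subgroup.zpowers γ).inv_mem hδ)]

/-- Local rigidity: if `γ` fixes a vertex and one edge at it, it fixes all edges at it. -/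
lemma rigid_local (hh : A.ActsHarmonically) {γ : Γ} {x : G.V} {e : G.E}
    (hx : A.actV γ x = x) (he : x ∈ G.ends e) (hfe : A.actE γ e = e) :
    ∀ f, x ∈ G.ends f → A.actE γ f = f := by
  intro f hf
  set Δ := Subgroup.zpowers γ with hΔ
  have hcount_e : Nat.card {e' : G.E // x ∈ G.ends e' ∧ A.erel Δ e' e} = 1 := by
    rw [Nat.card_eq_one_iff_unique]
    constructor
    · constructor
      rintro ⟨e₁, hx1, δ, hδ, h1⟩ ⟨e₂, hx2, δ', hδ', h2⟩
      have he1 : e₁ = e := by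
        have h3 := congrArg (A.actE δ⁻¹) h1
        rw [A.actE_inv_actE] at h3
        rw [h3, A.actE_fix_of_mem_zpowers hfe (Δ.inv_mem hδ)]
      have he2 : e₂ = e := by
        have h3 := congrArg (A.actE δ'⁻¹) h2
        rw [A.actE_inv_actE] at h3
        rw [h3, A.actE_fix_of_mem_zpowers hfe (Δ.inv_mem hδ')]
      simp [he1, he2]
    · exact ⟨⟨e, he, 1, Δ.one_mem, by simp⟩⟩
  have hq := (hh Δ).1 x f e (A.not_vertical_of_fix hx hf) (A.not_vertical_of_fix hx he)
      ⟨x, hf, 1, Δ.one_mem, by simp⟩ ⟨x, he, 1, Δ.one_mem, by simp⟩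
  rw [hcount_e] at hq
  obtain ⟨hsub, -⟩ := Nat.card_eq_one_iff_unique.mp hq
  have m1 : x ∈ G.ends (A.actE γ f) := by
    have := A.mem_ends_act (γ := γ) hf
    rwa [hx] at this
  have m2 : A.erel Δ (A.actE γ f) f := ⟨γ⁻¹, Δ.inv_mem (Subgroup.mem_zpowers γ),
    A.actE_inv_actE γ f⟩
  have := hsub.allEq ⟨A.actE γ f, m1, m2⟩ ⟨f, hf, 1, Δ.one_mem, by simp⟩
  exact congrArg Subtype.val this

/-- Rigidity: an element fixing a vertex and an edge at that vertex is trivial. -/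
lemma rigid (hh : A.ActsHarmonically) {γ : Γ} {x : G.V} {e : G.E}
    (hx : A.actV γ x = x) (he : x ∈ G.ends e) (hfe : A.actE γ e = e) : γ = 1 := by
  classical
  set Gs := (SimpleGraph.fromRel fun x y : G.V => ∃ e : G.E, G.ends e = s(x, y)) with hGs
  set S : Set G.V := {z | A.actV γ z = z ∧ ∀ f, z ∈ G.ends f → A.actE γ f = f} with hS
  have seed : x ∈ S := ⟨hx, A.rigid_local hh hx he hfe⟩
  have step : ∀ z z', z ∈ S → Gs.Adj z z' → z' ∈ S := by
    intro z z' hz hadj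
    obtain ⟨hne, hor⟩ := hadj
    have : ∃ f, G.ends f = s(z, z') := by
      rcases hor with ⟨f, hf⟩ | ⟨f, hf⟩
      · exact ⟨f, hf⟩
      · exact ⟨f, by rw [hf, Sym2.eq_swap]⟩
    obtain ⟨f, hf⟩ := this
    have hzf : z ∈ G.ends f := by rw [hf]; exact Sym2.mem_mk_left _ _
    have hzf' : z' ∈ G.ends f := by rw [hf]; exact Sym2.mem_mk_right _ _
    have hγf : A.actE γ f = f := hz.2 f hzf
    have hz' : A.actV γ z' = z' := by
      have hm := A.mem_ends_act (γ := γ) hzf'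
      rw [hγf, hf, Sym2.mem_iff] at hm
      rcases hm with h | h
      · exfalso
        have h1 := congrArg (A.actV γ⁻¹) h
        rw [A.actV_inv_actV] at h1
        have h2 := congrArg (A.actV γ⁻¹) hz.1
        rw [A.actV_inv_actV] at h2
        exact hne (h2.trans h1.symm)
      · exact h
    exact ⟨hz', A.rigid_local hh hz' hzf' hγf⟩
  have walkprop : ∀ (u v : G.V), u ∈ S → Gs.Walk u v → v ∈ S := by
    intro u v hu w
    induction w with
    | nil => exact hu
    | cons h w ih => exact ih (step _ _ hu h)
  have hall : ∀ z : G.V, z ∈ S := by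
    intro z
    obtain ⟨w⟩ := G.connected.preconnected x z
    exact walkprop x z seed w
  refine A.faithful γ (fun z => (hall z).1) (fun f => ?_)
  exact (hall _).2 f (Sym2.out_fst_mem _)

end GraphAction
section Counting2
variable {α : Type} {H : Type} [Group H] [Fintype H] [Fintype α]

lemma card_eq_card_mul_quotient (f : H →* Equiv.Perm α) (S : Setoid α)
    (hS : ∀ a b : α, S.r a b ↔ ∃ h : H, f h a = b)
    (hfree : ∀ (h : H) (a : α), f h a = a → h = 1) :
    Nat.card α = Nat.card H * Nat.card (Quotient S) := by
  classical
  have key : ∀ q : Quotient S, Nat.card {a // Quotient.mk S a = q} = Nat.card H := by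
    intro q
    have hiff : ∀ a : α, (Quotient.mk S a = q) ↔ ∃ h : H, f h q.out = a := by
      intro a
      constructor
      · intro h
        have h2 : S.r a q.out := Quotient.exact (h.trans (Quotient.out_eq q).symm)
        obtain ⟨g, hg⟩ := (hS a q.out).mp h2
        refine ⟨g⁻¹, ?_⟩
        rw [← hg, ← Equiv.Perm.mul_apply, ← map_mul, inv_mul_cancel, map_one,
          Equiv.Perm.one_apply]
      · rintro ⟨g, hg⟩
        have : S.r a q.out := (hS a q.out).mpr ⟨g⁻¹, by
          rw [← hg, ← Equiv.Perm.mul_apply, ← map_mul, inv_mul_cancel, map_one,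
            Equiv.Perm.one_apply]⟩
        exact (Quotient.sound this).trans (Quotient.out_eq q)
    rw [Nat.card_congr (Equiv.subtypeEquivRight hiff),
      orbit_card_of_free f q.out (fun h hh => hfree h _ hh)]
  rw [card_eq_sum_fibers (Quotient.mk S)]
  simp only [key, Finset.sum_const, smul_eq_mul, Finset.card_univ]
  rw [Nat.card_eq_fintype_card (α := Quotient S), mul_comm]

end Counting2

namespace Multigraph

lemma ends_eq (G : Multigraph) (e : G.E) : ∃ a b, G.ends e = s(a, b) ∧ a ≠ b := by
  obtain ⟨a, b, hab⟩ : ∃ a b, G.ends e = s(a, b) := by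
    have : ∀ q : Sym2 G.V, ∃ a b, q = s(a, b) := fun q => by
      induction q using Sym2.inductionOn with
      | hf a b => exact ⟨a, b, rfl⟩
    exact this _
  refine ⟨a, b, hab, fun h => ?_⟩
  exact G.loopless e (by rw [hab, h]; exact Sym2.mk_isDiag_iff.mpr rfl)

lemma card_mem_ends (G : Multigraph) (e : G.E) :
    Nat.card {x : G.V // x ∈ G.ends e} = 2 := by
  classical
  obtain ⟨a, b, hab, hne⟩ := G.ends_eq e
  have heq : {x : G.V // x ∈ G.ends e} ≃ ({a, b} : Set G.V) :=
    Equiv.subtypeEquivRight (fun x => by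
      rw [hab, Sym2.mem_iff]; simp [Set.mem_insert_iff])
  rw [Nat.card_congr heq, Nat.card_coe_set_eq, Set.ncard_pair hne]

end Multigraph

namespace GraphAction

variable {Γ : Type} [Group Γ] {G : Multigraph} (A : GraphAction Γ G) (Δ : Subgroup Γ)

/-- The action of `Δ` on vertices, as a homomorphism to permutations. -/
def fV : ↥Δ →* Equiv.Perm G.V := A.actV.comp Δ.subtype

/-- The action of `Δ` on edges, as a homomorphism to permutations. -/
def fE : ↥Δ →* Equiv.Perm G.E := A.actE.comp Δ.subtype

lemma vrel_iff (x y : G.V) : A.vrel Δ x y ↔ ∃ d : ↥Δ, A.fV Δ d x = y := by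
  constructor
  · rintro ⟨δ, hδ, h⟩; exact ⟨⟨δ, hδ⟩, h⟩
  · rintro ⟨⟨δ, hδ⟩, h⟩; exact ⟨δ, hδ, h⟩

lemma erel_iff (e f : G.E) : A.erel Δ e f ↔ ∃ d : ↥Δ, A.fE Δ d e = f := by
  constructor
  · rintro ⟨δ, hδ, h⟩; exact ⟨⟨δ, hδ⟩, h⟩
  · rintro ⟨⟨δ, hδ⟩, h⟩; exact ⟨δ, hδ, h⟩

noncomputable instance : Fintype (A.quotV Δ) := Quotient.fintype _
noncomputable instance : Fintype (A.quotE Δ) := Quotient.fintype _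

/-- The size of the vertex orbit corresponding to `y`. -/
noncomputable def oV (y : A.quotV Δ) : ℕ :=
  Nat.card {x : G.V // Quotient.mk (A.vSetoid Δ) x = y}

/-- The number of vertical edges at a representative of `y`. -/
noncomputable def vM (y : A.quotV Δ) : ℕ := A.vertMult Δ (Quotient.out y)

lemma oV_mul_r (y : A.quotV Δ) : A.oV Δ y * A.r Δ y = Nat.card ↥Δ := by
  classical
  haveI : Finite Γ := A.finite_gamma
  haveI : Fintype ↥Δ := Fintype.ofFinite _
  have hiff : ∀ x : G.V, (Quotient.mk (A.vSetoid Δ) x = y) ↔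
      ∃ d : ↥Δ, A.fV Δ d (Quotient.out y) = x := by
    intro x
    constructor
    · intro h
      have h2 : A.vrel Δ x (Quotient.out y) :=
        Quotient.exact (h.trans (Quotient.out_eq y).symm)
      obtain ⟨d, hd⟩ := (A.vrel_iff Δ _ _).mp h2
      refine ⟨d⁻¹, ?_⟩
      rw [← hd, ← Equiv.Perm.mul_apply, ← map_mul, inv_mul_cancel, map_one,
        Equiv.Perm.one_apply]
    · rintro ⟨d, hd⟩
      have : A.vrel Δ x (Quotient.out y) := (A.vrel_iff Δ _ _).mpr ⟨d⁻¹, by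
        rw [← hd, ← Equiv.Perm.mul_apply, ← map_mul, inv_mul_cancel, map_one,
          Equiv.Perm.one_apply]⟩
      exact (Quotient.sound this).trans (Quotient.out_eq y)
  have hst : A.r Δ y = Nat.card {d : ↥Δ // A.fV Δ d (Quotient.out y) = Quotient.out y} := by
    refine Nat.card_congr ⟨fun s => ⟨⟨s.1, s.2.1⟩, s.2.2⟩, fun t => ⟨t.1.1, t.1.2, t.2⟩, ?_, ?_⟩ <;>
      (intro z; rfl)
  show Nat.card {x : G.V // Quotient.mk (A.vSetoid Δ) x = y} * A.r Δ y = Nat.card ↥Δ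
  rw [Nat.card_congr (Equiv.subtypeEquivRight hiff), hst]
  exact orbit_mul_stab (A.fV Δ) (Quotient.out y)

lemma card_V_eq_sum : Nat.card G.V = ∑ y : A.quotV Δ, A.oV Δ y :=
  card_eq_sum_fibers (Quotient.mk (A.vSetoid Δ))

lemma oV_pos (y : A.quotV Δ) : 0 < A.oV Δ y := by
  have : Nonempty {x : G.V // Quotient.mk (A.vSetoid Δ) x = y} :=
    ⟨⟨Quotient.out y, Quotient.out_eq y⟩⟩
  exact Nat.card_pos

lemma r_pos (y : A.quotV Δ) : 0 < A.r Δ y := by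
  have : Nonempty {γ : Γ // γ ∈ Δ ∧ A.actV γ (Quotient.out y) = Quotient.out y} :=
    ⟨⟨1, Δ.one_mem, by simp⟩⟩
  haveI : Finite Γ := A.finite_gamma
  exact Nat.card_pos

lemma vertical_act {δ : Γ} (hδ : δ ∈ Δ) {e : G.E} (h : A.Vertical Δ e) :
    A.Vertical Δ (A.actE δ e) := by
  obtain ⟨a, b, hab, δ', hδ', hba⟩ := h
  refine ⟨A.actV δ a, A.actV δ b, ?_, δ * δ' * δ⁻¹, Δ.mul_mem (Δ.mul_mem hδ hδ') (Δ.inv_mem hδ),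
    ?_⟩
  · rw [A.ends_map, hab, Sym2.map_pair_eq]
  · rw [map_mul, map_mul, Equiv.Perm.mul_apply, Equiv.Perm.mul_apply, map_inv,
      Equiv.Perm.inv_def, Equiv.symm_apply_apply, hba]

lemma vertical_act_iff {δ : Γ} (hδ : δ ∈ Δ) {e : G.E} :
    A.Vertical Δ (A.actE δ e) ↔ A.Vertical Δ e := by
  constructor
  · intro h
    have := A.vertical_act Δ (Δ.inv_mem hδ) h
    rwa [A.actE_inv_actE] at this
  · exact A.vertical_act Δ hδ

/-- The action of `Δ` on non-vertical edges. -/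
def fEnv : ↥Δ →* Equiv.Perm {e : G.E // ¬ A.Vertical Δ e} where
  toFun d := Equiv.Perm.subtypePerm (A.actE d)
    (fun e => not_congr (A.vertical_act_iff Δ d.2))
  map_one' := by
    ext e
    simp [Equiv.Perm.subtypePerm_apply]
  map_mul' d d' := by
    ext e
    simp [Equiv.Perm.subtypePerm_apply, Equiv.Perm.mul_apply]
    rfl

lemma fEnv_free (hh : A.ActsHarmonically) (d : ↥Δ) (eh : {e : G.E // ¬ A.Vertical Δ e})
    (h : A.fEnv Δ d eh = eh) : d = 1 := by
  have hE : A.actE d eh = (eh : G.E) := congrArg Subtype.val h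
  obtain ⟨a, b, hab, hne⟩ := G.ends_eq (eh : G.E)
  have hmap : s(A.actV d a, A.actV d b) = s(a, b) := by
    rw [← Sym2.map_pair_eq, ← hab, ← A.ends_map, hE, hab]
  rcases Sym2.eq_iff.mp hmap with ⟨ha, _⟩ | ⟨hb, _⟩
  · have : (d : Γ) = 1 := A.rigid hh ha (by rw [hab]; exact Sym2.mem_mk_left _ _) hE
    exact Subtype.ext this
  · exfalso
    exact eh.2 ⟨a, b, hab, d, d.2, hb⟩

lemma card_nonvertical (hh : A.ActsHarmonically) :
    Nat.card {e : G.E // ¬ A.Vertical Δ e} = Nat.card ↥Δ * Nat.card (A.quotE Δ) := by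
  classical
  haveI : Finite Γ := A.finite_gamma
  haveI : Fintype ↥Δ := Fintype.ofFinite _
  refine card_eq_card_mul_quotient (A.fEnv Δ) _ (fun a b => ?_) (A.fEnv_free Δ hh)
  show A.erel Δ (a : G.E) (b : G.E) ↔ _
  rw [A.erel_iff Δ]
  constructor
  · rintro ⟨d, hd⟩; exact ⟨d, Subtype.ext hd⟩
  · rintro ⟨d, hd⟩; exact ⟨d, congrArg Subtype.val hd⟩

end GraphAction
namespace GraphAction

variable {Γ : Type} [Group Γ] {G : Multigraph} (A : GraphAction Γ G) (Δ : Subgroup Γ)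

lemma mem_ends_act_iff {δ : Γ} {x : G.V} {e : G.E} :
    A.actV δ x ∈ G.ends (A.actE δ e) ↔ x ∈ G.ends e := by
  constructor
  · intro h
    have := A.mem_ends_act (γ := δ⁻¹) h
    rwa [A.actV_inv_actV, A.actE_inv_actE] at this
  · exact A.mem_ends_act

lemma vertMult_act {δ : Γ} (hδ : δ ∈ Δ) (x : G.V) :
    A.vertMult Δ (A.actV δ x) = A.vertMult Δ x := by
  have heq : {e : G.E // x ∈ G.ends e ∧ A.Vertical Δ e} ≃
      {e : G.E // A.actV δ x ∈ G.ends e ∧ A.Vertical Δ e} :=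
    Equiv.subtypeEquiv (A.actE δ) (fun e => by
      rw [A.mem_ends_act_iff, A.vertical_act_iff Δ hδ])
  rw [vertMult, vertMult, ← Nat.card_congr heq]

lemma vertMult_congr {x : G.V} {y : A.quotV Δ} (h : Quotient.mk (A.vSetoid Δ) x = y) :
    A.vertMult Δ x = A.vM Δ y := by
  have h2 : A.vrel Δ x (Quotient.out y) :=
    Quotient.exact (h.trans (Quotient.out_eq y).symm)
  obtain ⟨δ, hδ, hd⟩ := h2
  rw [vM, ← hd, A.vertMult_act Δ hδ]

lemma sum_vertMult :
    ∑ x : G.V, A.vertMult Δ x = ∑ y : A.quotV Δ, A.oV Δ y * A.vM Δ y := by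
  classical
  rw [← Fintype.sum_fiberwise (Quotient.mk (A.vSetoid Δ)) (fun x => A.vertMult Δ x)]
  refine Finset.sum_congr rfl (fun y _ => ?_)
  have : ∀ i : {i : G.V // Quotient.mk (A.vSetoid Δ) i = y},
      A.vertMult Δ (i : G.V) = A.vM Δ y := fun i => A.vertMult_congr Δ i.2
  rw [Finset.sum_congr rfl (fun i _ => this i), Finset.sum_const, Finset.card_univ,
    smul_eq_mul, oV, Nat.card_eq_fintype_card]

lemma two_mul_card_vertical :
    2 * Nat.card {e : G.E // A.Vertical Δ e} = ∑ x : G.V, A.vertMult Δ x := by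
  classical
  have h1 : Nat.card {pr : G.V × G.E // pr.1 ∈ G.ends pr.2 ∧ A.Vertical Δ pr.2} =
      ∑ x : G.V, A.vertMult Δ x := by
    rw [card_eq_sum_fibers (fun pr : {pr : G.V × G.E // pr.1 ∈ G.ends pr.2 ∧ A.Vertical Δ pr.2}
      => pr.val.1)]
    refine Finset.sum_congr rfl (fun x _ => ?_)
    refine Nat.card_congr ⟨fun s => ⟨s.1.1.2, by
        obtain ⟨⟨⟨a, e⟩, h1, h2⟩, h3⟩ := s
        dsimp at h3 ⊢
        subst h3
        exact ⟨h1, h2⟩⟩,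
      fun t => ⟨⟨⟨x, t.1⟩, t.2.1, t.2.2⟩, rfl⟩, ?_, ?_⟩
    · rintro ⟨⟨⟨a, e⟩, h1, h2⟩, h3⟩
      dsimp at h3
      subst h3
      rfl
    · intro t
      rfl
  have h2 : Nat.card {pr : G.V × G.E // pr.1 ∈ G.ends pr.2 ∧ A.Vertical Δ pr.2} =
      2 * Nat.card {e : G.E // A.Vertical Δ e} := by
    rw [card_eq_sum_fibers (fun pr : {pr : G.V × G.E // pr.1 ∈ G.ends pr.2 ∧ A.Vertical Δ pr.2}
      => pr.val.2)]
    have key : ∀ e : G.E, Nat.card {pr : {pr : G.V × G.E // pr.1 ∈ G.ends pr.2 ∧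
        A.Vertical Δ pr.2} // pr.val.2 = e} = if A.Vertical Δ e then 2 else 0 := by
      intro e
      by_cases hv : A.Vertical Δ e
      · rw [if_pos hv, ← G.card_mem_ends e]
        refine Nat.card_congr ⟨fun s => ⟨s.1.1.1, by
            obtain ⟨⟨⟨a, f⟩, h1, h2⟩, h3⟩ := s
            dsimp at h3 ⊢
            subst h3
            exact h1⟩,
          fun t => ⟨⟨⟨t.1, e⟩, t.2, hv⟩, rfl⟩, ?_, ?_⟩
        · rintro ⟨⟨⟨a, f⟩, h1, h2⟩, h3⟩
          dsimp at h3
          subst h3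
          rfl
        · intro t
          rfl
      · rw [if_neg hv]
        have : IsEmpty {pr : {pr : G.V × G.E // pr.1 ∈ G.ends pr.2 ∧ A.Vertical Δ pr.2} //
            pr.val.2 = e} := ⟨by
          rintro ⟨⟨⟨a, f⟩, h1, h2⟩, h3⟩
          dsimp at h3
          subst h3
          exact hv h2⟩
        exact Nat.card_of_isEmpty
    rw [Finset.sum_congr rfl (fun e _ => key e)]
    rw [Nat.card_eq_fintype_card, Fintype.card_subtype, ← Finset.sum_filter,
      Finset.sum_const, smul_eq_mul, mul_comm]
  rw [← h1, h2]

/-- The stabilizer of a vertex, as a subgroup of `Γ`. -/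
def stabSub (x : G.V) : Subgroup Γ where
  carrier := {γ | A.actV γ x = x}
  one_mem' := by simp
  mul_mem' := by
    intro a b ha hb
    simp only [Set.mem_setOf_eq] at *
    rw [map_mul, Equiv.Perm.mul_apply, hb, ha]
  inv_mem' := by
    intro a ha
    simp only [Set.mem_setOf_eq] at *
    have := A.actV_inv_actV a x
    rwa [ha] at this

lemma r_eq_card_stab (y : A.quotV Δ) :
    A.r Δ y = Nat.card ↥(Δ ⊓ A.stabSub (Quotient.out y)) := by
  refine Nat.card_congr ⟨fun s => ⟨s.1, Subgroup.mem_inf.mpr ⟨s.2.1, s.2.2⟩⟩,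
    fun t => ⟨t.1, (Subgroup.mem_inf.mp t.2).1, (Subgroup.mem_inf.mp t.2).2⟩, ?_, ?_⟩ <;>
    (intro z; rfl)

/-- The stabilizer of `x` in `Δ` acts on the vertical edges at `x`. -/
def fStab (x : G.V) : ↥(Δ ⊓ A.stabSub x) →* Equiv.Perm {e : G.E // x ∈ G.ends e ∧ A.Vertical Δ e} where
  toFun d := Equiv.Perm.subtypePerm (A.actE d) (fun e => by
    have hd : A.actV (d : Γ) x = x := (Subgroup.mem_inf.mp d.2).2
    have hΔd : (d : Γ) ∈ Δ := (Subgroup.mem_inf.mp d.2).1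
    apply Iff.symm
    constructor
    · rintro ⟨h1, h2⟩
      refine ⟨?_, A.vertical_act Δ hΔd h2⟩
      have := A.mem_ends_act (γ := (d : Γ)) h1
      rwa [hd] at this
    · rintro ⟨h1, h2⟩
      have h1' : x ∈ G.ends e := by
        have h3 := A.mem_ends_act (γ := (d : Γ)⁻¹) h1
        rw [A.actE_inv_actE] at h3
        have hdi : A.actV (d : Γ)⁻¹ x = x := by
          have h4 := A.actV_inv_actV (d : Γ) x
          rwa [hd] at h4
        rwa [hdi] at h3

      exact ⟨h1', (A.vertical_act_iff Δ hΔd).mp h2⟩)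
  map_one' := by
    ext e
    simp [Equiv.Perm.subtypePerm_apply]
  map_mul' d d' := by
    ext e
    simp [Equiv.Perm.subtypePerm_apply, Equiv.Perm.mul_apply]
    rfl

lemma r_dvd_vM (hh : A.ActsHarmonically) (y : A.quotV Δ) : A.r Δ y ∣ A.vM Δ y := by
  classical
  haveI : Finite Γ := A.finite_gamma
  haveI : Fintype ↥(Δ ⊓ A.stabSub (Quotient.out y)) := Fintype.ofFinite _
  rw [A.r_eq_card_stab Δ y]
  refine card_dvd_of_free (A.fStab Δ (Quotient.out y)) ?_
  intro d e he
  have hE : A.actE (d : Γ) (e : G.E) = (e : G.E) := congrArg Subtype.val he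
  have hd : A.actV (d : Γ) (Quotient.out y) = Quotient.out y := (Subgroup.mem_inf.mp d.2).2
  exact Subtype.ext (A.rigid hh hd e.2.1 hE)

end GraphAction
namespace GraphAction

variable {Γ : Type} [Group Γ] {G : Multigraph} (A : GraphAction Γ G) (Δ : Subgroup Γ)

/-- The class map `V → V/Δ`. -/
def cls : G.V → A.quotV Δ := Quotient.mk (A.vSetoid Δ)

lemma cls_act {δ : Γ} (hδ : δ ∈ Δ) (x : G.V) : A.cls Δ (A.actV δ x) = A.cls Δ x :=
  (Quotient.sound (⟨δ, hδ, rfl⟩ : A.vrel Δ x (A.actV δ x))).symm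

lemma epair_congr {e f : G.E} (h : A.erel Δ e f) :
    Sym2.map (A.cls Δ) (G.ends e) = Sym2.map (A.cls Δ) (G.ends f) := by
  obtain ⟨δ, hδ, rfl⟩ := h
  rw [A.ends_map, Sym2.map_map]
  congr 1
  funext x
  exact (A.cls_act Δ hδ x).symm

/-- The endpoints in `V/Δ` of a quotient edge. -/
noncomputable def epairQ : A.quotE Δ → Sym2 (A.quotV Δ) :=
  Quotient.lift (fun e : {e : G.E // ¬ A.Vertical Δ e} => Sym2.map (A.cls Δ) (G.ends ↑e))
    (fun e f hef => A.epair_congr Δ hef)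

lemma not_vertical_of_cls_ne {e : G.E} {x z : G.V} (hab : G.ends e = s(x, z))
    (hne : A.cls Δ x ≠ A.cls Δ z) : ¬ A.Vertical Δ e := by
  rintro ⟨a, b, hab', hrel⟩
  rw [hab] at hab'
  rcases Sym2.eq_iff.mp hab' with ⟨rfl, rfl⟩ | ⟨rfl, rfl⟩
  · exact hne (Quotient.sound hrel)
  · exact hne (Quotient.sound ((A.vSetoid Δ).symm hrel))

/-- The quotient graph, as a simple graph on the orbit classes. -/
noncomputable def quotGraph : SimpleGraph (A.quotV Δ) :=
  SimpleGraph.fromRel (fun a b => ∃ q : A.quotE Δ, A.epairQ Δ q = s(a, b))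

lemma quotGraph_connected : (A.quotGraph Δ).Connected := by
  classical
  haveI hne : Nonempty G.V := G.connected.nonempty
  rw [SimpleGraph.connected_iff]
  refine ⟨?_, ⟨Quotient.mk _ (Classical.arbitrary G.V)⟩⟩
  · intro a b
    obtain ⟨x, rfl⟩ := Quotient.exists_rep a
    obtain ⟨z, rfl⟩ := Quotient.exists_rep b
    have key : ∀ (u v : G.V), (SimpleGraph.fromRel fun x y : G.V =>
        ∃ e : G.E, G.ends e = s(x, y)).Walk u v →
        (A.quotGraph Δ).Reachable (A.cls Δ u) (A.cls Δ v) := by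
      intro u v w
      induction w with
      | nil => exact SimpleGraph.Reachable.refl _
      | @cons u' w' v' hadj w ih =>
        refine SimpleGraph.Reachable.trans ?_ ih
        by_cases hc : A.cls Δ u' = A.cls Δ w'
        · rw [hc]
        · obtain ⟨hne', hor⟩ := hadj
          have : ∃ e, G.ends e = s(u', w') := by
            rcases hor with ⟨e, he⟩ | ⟨e, he⟩
            · exact ⟨e, he⟩
            · exact ⟨e, by rw [he, Sym2.eq_swap]⟩
          obtain ⟨e, he⟩ := this
          have hnv : ¬ A.Vertical Δ e := A.not_vertical_of_cls_ne Δ he hc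
          refine SimpleGraph.Adj.reachable ⟨hc, Or.inl ⟨Quotient.mk _ ⟨e, hnv⟩, ?_⟩⟩
          show Sym2.map (A.cls Δ) (G.ends e) = _
          rw [he, Sym2.map_pair_eq]
    obtain ⟨w⟩ := G.connected.preconnected x z
    exact key x z w

lemma card_quotV_le : Nat.card (A.quotV Δ) ≤ Nat.card (A.quotE Δ) + 1 := by
  classical
  have hconn := A.quotGraph_connected Δ
  haveI hne : Nonempty (A.quotV Δ) := hconn.nonempty
  set H := A.quotGraph Δ
  have root : A.quotV Δ := Classical.arbitrary _
  have hex : ∀ a : A.quotV Δ, a ≠ root → ∃ (q : A.quotE Δ) (b : A.quotV Δ),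
      A.epairQ Δ q = s(a, b) ∧ H.dist b root < H.dist a root := by
    intro a ha
    obtain ⟨w, hw⟩ := hconn.exists_walk_length_eq_dist a root
    cases w with
    | nil => exact absurd rfl ha
    | @cons _ b _ hadj w' =>
      obtain ⟨hne', hor⟩ := hadj
      have hq : ∃ q : A.quotE Δ, A.epairQ Δ q = s(a, b) := by
        rcases hor with ⟨q, hqq⟩ | ⟨q, hqq⟩
        · exact ⟨q, hqq⟩
        · exact ⟨q, by rw [hqq, Sym2.eq_swap]⟩
      obtain ⟨q, hqq⟩ := hq
      refine ⟨q, b, hqq, ?_⟩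
      have h1 : H.dist b root ≤ w'.length := SimpleGraph.dist_le w'
      have hw : w'.length + 1 = H.dist a root := hw
      omega
  choose fq fb hfq hflt using hex
  have hinj : Function.Injective (fun a : {a : A.quotV Δ // a ≠ root} => fq a a.2) := by
    intro a a' h
    dsimp at h
    have h2 : s((a : A.quotV Δ), fb a a.2) = s((a' : A.quotV Δ), fb a' a'.2) := by
      rw [← hfq a a.2, ← hfq a' a'.2, h]
    rcases Sym2.eq_iff.mp h2 with ⟨h3, _⟩ | ⟨h3, h4⟩
    · exact Subtype.ext h3
    · exfalso
      have l1 := hflt a a.2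
      have l2 := hflt a' a'.2
      have e1 := congrArg (fun z => H.dist z root) h3
      have e2 := congrArg (fun z => H.dist z root) h4
      dsimp at e1 e2
      omega
  have hcard : Fintype.card {a : A.quotV Δ // a ≠ root} ≤ Fintype.card (A.quotE Δ) :=
    Fintype.card_le_of_injective _ hinj
  have hsplit : Fintype.card {a : A.quotV Δ // ¬ (a = root)} =
      Fintype.card (A.quotV Δ) - Fintype.card {a : A.quotV Δ // a = root} :=
    Fintype.card_subtype_compl _
  rw [Fintype.card_subtype_eq] at hsplit
  have hpos : 1 ≤ Fintype.card (A.quotV Δ) := Fintype.card_pos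
  rw [Nat.card_eq_fintype_card, Nat.card_eq_fintype_card]
  have : Fintype.card {a : A.quotV Δ // ¬ (a = root)} =
      Fintype.card {a : A.quotV Δ // a ≠ root} := rfl
  omega

end GraphAction
section Arith

lemma arith_endgame {a k m p : ℕ} (hp : 1 ≤ p) (hm : 4 * p < m) (hak : a * k = m)
    (hmm : m = 2 * p + 2 * a) (hk : 3 ≤ k) : k = 3 ∧ m = 6 * p := by
  obtain ⟨k', rfl⟩ : ∃ k', k = k' + 3 := ⟨k - 3, by omega⟩
  have h1 : a * k' + 3 * a = m := by rw [← hak]; ring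
  generalize hq : a * k' = q at h1
  have hk' : k' = 0 := by
    by_contra h
    have : a ≤ a * k' := Nat.le_mul_of_pos_right a (by omega)
    omega
  subst hk'
  simp only [Nat.mul_zero] at hq
  omega

lemma arith_main {ι : Type} [Fintype ι] (m p gq : ℕ) (o r v : ι → ℕ)
    (hp : 2 ≤ p) (hm : 4 * p < m)
    (h1 : ∀ y, o y * r y = m) (h2 : ∀ y, 1 ≤ r y) (h3 : ∀ y, r y ∣ v y)
    (heq : 2 * p + 2 * m = 2 * m * gq + ∑ y, (2 * (m - o y) + o y * v y)) :
    m = 6 * p ∧ ∃ y, r y = 3 := by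
  classical
  set c : ι → ℕ := fun y => 2 * (m - o y) + o y * v y with hc
  have hopos : ∀ y, 1 ≤ o y := by
    intro y
    rcases Nat.eq_zero_or_pos (o y) with h | h
    · exfalso; have := h1 y; rw [h, zero_mul] at this; omega
    · exact h
  have hole : ∀ y, o y ≤ m := by
    intro y
    have := h1 y
    have h4 : o y ≤ o y * r y := Nat.le_mul_of_pos_right _ (h2 y)
    omega
  -- each nonzero c y is at least m
  have hbig : ∀ y, c y = 0 ∨ m ≤ c y := by
    intro y
    rcases Nat.lt_or_ge (r y) 2 with hr | hr
    · -- r y = 1, o y = m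
      have hr1 : r y = 1 := by have := h2 y; omega
      have hom : o y = m := by have := h1 y; rw [hr1, mul_one] at this; exact this
      rcases Nat.eq_zero_or_pos (v y) with hv | hv
      · left; simp [hc, hom, hv]
      · right
        have : m * 1 ≤ m * v y := Nat.mul_le_mul_left m hv
        simp only [hc, hom, Nat.sub_self, Nat.mul_zero, Nat.zero_add]
        omega
    · -- r y ≥ 2 so 2 o y ≤ m
      right
      have h2o : 2 * o y ≤ m := by
        have := h1 y
        have h4 : o y * 2 ≤ o y * r y := Nat.mul_le_mul_left _ hr
        omega
      have : m ≤ 2 * (m - o y) := by omega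
      simp only [hc]
      omega
  set s : Finset ι := Finset.univ.filter (fun y => c y ≠ 0) with hs
  have hsum : ∑ y ∈ s, c y = ∑ y : ι, c y := Finset.sum_filter_ne_zero _
  have hatom : (∑ y : ι, c y) = Finset.univ.sum c := rfl
  rw [hatom] at hsum
  have hcardle : ∀ y ∈ s, m ≤ c y := by
    intro y hy
    rcases hbig y with h | h
    · exfalso; exact (Finset.mem_filter.mp hy).2 h
    · exact h
  have hlower : s.card * m ≤ ∑ y ∈ s, c y := by
    have := Finset.card_nsmul_le_sum s c m hcardle
    simpa [smul_eq_mul] using this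
  -- gq = 0
  have hgq : gq = 0 := by
    by_contra h
    have hgq1 : 1 ≤ gq := by omega
    have h2m : 2 * m * 1 ≤ 2 * m * gq := Nat.mul_le_mul_left _ hgq1
    rw [mul_one] at h2m
    have hcz : s.card = 0 := by
      by_contra h0
      have h0' : 0 < s.card := by omega
      have hmc : m ≤ s.card * m := Nat.le_mul_of_pos_left m h0'
      generalize hA : 2 * m * gq = X at heq h2m
      generalize hB : s.card * m = Y at hmc hlower
      omega
    have hzero : ∑ y ∈ s, c y = 0 := by rw [Finset.card_eq_zero.mp hcz]; simp
    rw [hzero] at hsum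
    rw [← hsum] at heq
    rcases Nat.lt_or_ge gq 2 with hg | hg
    · have hgq1' : gq = 1 := by omega
      rw [hgq1', mul_one] at heq
      omega
    · have hgg : 2 * m * 2 ≤ 2 * m * gq := Nat.mul_le_mul_left _ hg
      generalize hA : 2 * m * gq = X at heq hgg
      omega
  rw [hgq] at heq
  simp only [Nat.mul_zero, Nat.zero_add] at heq
  -- sum over s equals 2p + 2m
  have hseq : ∑ y ∈ s, c y = 2 * p + 2 * m := by rw [hsum]; omega
  have hcard2 : s.card ≤ 2 := by
    by_contra h
    have h3c : 3 ≤ s.card := by omega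
    have h3m : 3 * m ≤ s.card * m := Nat.mul_le_mul_right m h3c
    generalize hB : s.card * m = Y at h3m hlower
    omega
  have hcard1 : 1 ≤ s.card := by
    rcases Nat.eq_zero_or_pos s.card with h0 | h0
    · exfalso
      rw [Finset.card_eq_zero.mp h0] at hseq
      simp at hseq
      omega
    · exact h0
  -- helper: classification of members of s
  have hclass : ∀ y ∈ s, c y ≤ 2 * p + m →
      (c y = m) ∨ (3 ≤ r y ∧ v y = 0 ∧ c y = 2 * (m - o y)) := by
    intro y hy hcy
    rcases Nat.lt_or_ge (r y) 2 with hr | hr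
    · -- r = 1: o = m, c = m v
      have hr1 : r y = 1 := by have := h2 y; omega
      have hom : o y = m := by have := h1 y; rw [hr1, mul_one] at this; exact this
      have hcv : c y = m * v y := by simp [hc, hom]
      have hv1 : v y = 1 := by
        rcases Nat.lt_or_ge (v y) 2 with hv | hv
        · have hvpos : 1 ≤ v y := by
            by_contra h
            have : v y = 0 := by omega
            exact (Finset.mem_filter.mp hy).2 (by rw [hcv, this, Nat.mul_zero])
          omega
        · exfalso
          have : m * 2 ≤ m * v y := Nat.mul_le_mul_left m hv
          omega
      left
      rw [hcv, hv1, Nat.mul_one]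
    · -- r ≥ 2
      obtain ⟨w, hw⟩ := h3 y
      have h2o : 2 * o y ≤ m := by
        have := h1 y
        have h4 : o y * 2 ≤ o y * r y := Nat.mul_le_mul_left _ hr
        omega
      rcases Nat.eq_zero_or_pos w with hw0 | hwpos
      · -- v = 0
        have hv0 : v y = 0 := by rw [hw, hw0, Nat.mul_zero]
        rcases Nat.lt_or_ge (r y) 3 with hr3 | hr3
        · -- r = 2 : c = m
          left
          have hr2 : r y = 2 := by omega
          have : o y * 2 = m := by have := h1 y; rwa [hr2] at this
          simp only [hc, hv0, Nat.mul_zero, Nat.add_zero]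
          omega
        · right
          exact ⟨hr3, hv0, by simp [hc, hv0]⟩
      · -- w ≥ 1 : c ≥ 2m, contradiction
        exfalso
        have hov : o y * v y = m * w := by
          rw [hw, show o y * (r y * w) = o y * r y * w from (mul_assoc _ _ _).symm, h1 y]
        have hmw : m ≤ m * w := Nat.le_mul_of_pos_right m hwpos
        have hmo : m ≤ 2 * (m - o y) := by omega
        have hcy' : c y = 2 * (m - o y) + m * w := by rw [hc]; simp only; rw [hov]
        generalize hA : m * w = X at hmw hcy'
        omega
  rcases (by omega : s.card = 1 ∨ s.card = 2) with h | h
  · -- one orbit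
    obtain ⟨y, hy⟩ := Finset.card_eq_one.mp h
    have hys : y ∈ s := by rw [hy]; exact Finset.mem_singleton_self y
    rw [hy, Finset.sum_singleton] at hseq
    -- c y = 2p + 2m
    rcases Nat.lt_or_ge (r y) 2 with hr | hr
    · -- r = 1 : m v = 2p + 2m, contradiction
      exfalso
      have hr1 : r y = 1 := by have := h2 y; omega
      have hom : o y = m := by have := h1 y; rw [hr1, mul_one] at this; exact this
      have hcv : c y = m * v y := by simp [hc, hom]
      rw [hcv] at hseq
      have hv3 : 3 ≤ v y := by
        by_contra hv
        have : v y ≤ 2 := by omega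
        have : m * v y ≤ m * 2 := Nat.mul_le_mul_left m this
        omega
      obtain ⟨u, hvu⟩ : ∃ u, v y = u + 3 := ⟨v y - 3, by omega⟩
      rw [hvu] at hseq
      have hexp : m * (u + 3) = m * u + 3 * m := by ring
      rw [hexp] at hseq
      generalize hq : m * u = q at hseq
      omega
    · -- r ≥ 2
      obtain ⟨w, hw⟩ := h3 y
      have h2o : 2 * o y ≤ m := by
        have := h1 y
        have h4 : o y * 2 ≤ o y * r y := Nat.mul_le_mul_left _ hr
        omega
      have hov : o y * v y = m * w := by
        rw [hw, show o y * (r y * w) = o y * r y * w from (mul_assoc _ _ _).symm, h1 y]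
      have hcy' : c y = 2 * (m - o y) + m * w := by rw [hc]; simp only; rw [hov]
      rw [hcy'] at hseq
      -- 2(m - o) + m w = 2p + 2m  =>  m w = 2p + 2 o
      have hmw : m * w = 2 * p + 2 * o y := by
        have hole' := hole y
        generalize hq : m * w = q at *
        omega
      have hw1 : w = 1 := by
        rcases Nat.lt_or_ge w 1 with h0 | h0
        · exfalso
          have : w = 0 := by omega
          rw [this, Nat.mul_zero] at hmw
          have := hopos y
          omega
        rcases Nat.lt_or_ge w 2 with h1' | h1'
        · omega
        · exfalso
          have : m * 2 ≤ m * w := Nat.mul_le_mul_left m h1'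
          generalize hq : m * w = q at *
          omega
      rw [hw1, Nat.mul_one] at hmw
      -- m = 2p + 2 o y, o y * r y = m, r ≥ 2: endgame needs r ≥ 3
      have hr3 : 3 ≤ r y := by
        rcases Nat.lt_or_ge (r y) 3 with hr' | hr'
        · exfalso
          have hr2 : r y = 2 := by omega
          have := h1 y
          rw [hr2] at this
          omega
        · exact hr'
      obtain ⟨hk3, hm6⟩ := arith_endgame (by omega) hm (h1 y) hmw hr3
      exact ⟨hm6, y, hk3⟩
  · -- two orbits
    obtain ⟨y₁, y₂, hne, hy⟩ := Finset.card_eq_two.mp h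
    have hy1 : y₁ ∈ s := by rw [hy]; simp
    have hy2 : y₂ ∈ s := by rw [hy]; simp
    rw [hy, Finset.sum_pair hne] at hseq
    have hb1 := hcardle y₁ hy1
    have hb2 := hcardle y₂ hy2
    have hle1 : c y₁ ≤ 2 * p + m := by omega
    have hle2 : c y₂ ≤ 2 * p + m := by omega
    rcases hclass y₁ hy1 hle1 with hA | ⟨hr1, hv1, hc1⟩
    · rcases hclass y₂ hy2 hle2 with hB | ⟨hr2, hv2, hc2⟩
      · exfalso; omega
      · -- c y₁ = m, y₂ has r ≥ 3, c₂ = 2(m - o₂)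
        have hmm : m = 2 * p + 2 * o y₂ := by
          rw [hA, hc2] at hseq
          have := hole y₂
          omega
        obtain ⟨hk3, hm6⟩ := arith_endgame (by omega) hm (h1 y₂) hmm hr2
        exact ⟨hm6, y₂, hk3⟩
    · rcases hclass y₂ hy2 hle2 with hB | ⟨hr2', hv2, hc2⟩
      · have hmm : m = 2 * p + 2 * o y₁ := by
          rw [hB, hc1] at hseq
          have := hole y₁
          omega
        obtain ⟨hk3, hm6⟩ := arith_endgame (by omega) hm (h1 y₁) hmm hr1
        exact ⟨hm6, y₁, hk3⟩
      · -- both r ≥ 3 : contradiction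
        exfalso
        have h31 : 3 * o y₁ ≤ m := by
          have := h1 y₁
          have h4 : o y₁ * 3 ≤ o y₁ * r y₁ := Nat.mul_le_mul_left _ hr1
          omega
        have h32 : 3 * o y₂ ≤ m := by
          have := h1 y₂
          have h4 : o y₂ * 3 ≤ o y₂ * r y₂ := Nat.mul_le_mul_left _ hr2'
          omega
        rw [hc1, hc2] at hseq
        have o1 := hole y₁
        have o2 := hole y₂
        omega

end Arith
namespace GraphAction

variable {Γ : Type} [Group Γ] {G : Multigraph} (A : GraphAction Γ G)

lemma oV_le (Δ : Subgroup Γ) (y : A.quotV Δ) : A.oV Δ y ≤ Nat.card ↥Δ := by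
  have h := A.oV_mul_r Δ y
  have h2 : A.oV Δ y * 1 ≤ A.oV Δ y * A.r Δ y := Nat.mul_le_mul_left _ (A.r_pos Δ y)
  rw [mul_one] at h2
  omega

/-- The Riemann–Hurwitz master equation for the quotient by `Δ`. -/
lemma rh (hh : A.ActsHarmonically) (Δ : Subgroup Γ) :
    ∃ gq : ℕ, 2 * (G.genus - 1) + 2 * (Nat.card ↥Δ : ℤ) =
      2 * (Nat.card ↥Δ : ℤ) * gq +
      ∑ y : A.quotV Δ, ((2 * (Nat.card ↥Δ - A.oV Δ y) + A.oV Δ y * A.vM Δ y : ℕ) : ℤ) := by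
  classical
  haveI : Finite Γ := A.finite_gamma
  set m := Nat.card ↥Δ with hm
  have hVE : Nat.card (A.quotV Δ) ≤ Nat.card (A.quotE Δ) + 1 := A.card_quotV_le Δ
  refine ⟨Nat.card (A.quotE Δ) + 1 - Nat.card (A.quotV Δ), ?_⟩
  set E' := Nat.card (A.quotE Δ) with hE'
  set V' := Nat.card (A.quotV Δ) with hV'
  set vert := Nat.card {e : G.E // A.Vertical Δ e} with hvert
  have hE : Nat.card G.E = vert + m * E' := by
    have hsplit : Nat.card G.E = Nat.card {e : G.E // A.Vertical Δ e} +
        Nat.card {e : G.E // ¬ A.Vertical Δ e} := by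
      rw [Nat.card_eq_fintype_card, Nat.card_eq_fintype_card, Nat.card_eq_fintype_card]
      rw [Fintype.card_subtype_compl]
      have : Fintype.card {e : G.E // A.Vertical Δ e} ≤ Fintype.card G.E :=
        Fintype.card_subtype_le _
      omega
    rw [hsplit, A.card_nonvertical Δ hh]
  have hV : Nat.card G.V = ∑ y : A.quotV Δ, A.oV Δ y := A.card_V_eq_sum Δ
  have h2v : 2 * vert = ∑ y : A.quotV Δ, A.oV Δ y * A.vM Δ y := by
    rw [hvert, A.two_mul_card_vertical Δ, A.sum_vertMult Δ]
  have hge : G.genus = (Nat.card G.E : ℤ) - (Nat.card G.V : ℤ) + 1 := by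
    rw [Multigraph.genus, Nat.card_eq_fintype_card, Nat.card_eq_fintype_card]
  -- cast the sum
  have hcast : ∀ y : A.quotV Δ, ((2 * (m - A.oV Δ y) + A.oV Δ y * A.vM Δ y : ℕ) : ℤ) =
      2 * ((m : ℤ) - (A.oV Δ y : ℤ)) + (A.oV Δ y : ℤ) * (A.vM Δ y : ℤ) := by
    intro y
    have : A.oV Δ y ≤ m := A.oV_le Δ y
    push_cast [this]
    ring
  rw [Finset.sum_congr rfl (fun y _ => hcast y)]
  have hsum1 : ∑ y : A.quotV Δ, (2 * ((m : ℤ) - (A.oV Δ y : ℤ)) +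
      (A.oV Δ y : ℤ) * (A.vM Δ y : ℤ)) =
      2 * (m : ℤ) * (V' : ℤ) - 2 * ((Nat.card G.V : ℕ) : ℤ) + 2 * (vert : ℤ) := by
    rw [Finset.sum_add_distrib]
    have ha : ∑ y : A.quotV Δ, 2 * ((m : ℤ) - (A.oV Δ y : ℤ)) =
        2 * (m : ℤ) * (V' : ℤ) - 2 * ((Nat.card G.V : ℕ) : ℤ) := by
      rw [← Finset.mul_sum, Finset.sum_sub_distrib, Finset.sum_const, Finset.card_univ]
      rw [hV]
      push_cast [hV']
      rw [Nat.card_eq_fintype_card]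
      push_cast
      ring
    have hb : ∑ y : A.quotV Δ, (A.oV Δ y : ℤ) * (A.vM Δ y : ℤ) = 2 * (vert : ℤ) := by
      have : ((∑ y : A.quotV Δ, A.oV Δ y * A.vM Δ y : ℕ) : ℤ) =
          ∑ y : A.quotV Δ, (A.oV Δ y : ℤ) * (A.vM Δ y : ℤ) := by
        push_cast
        rfl
      rw [← this, ← h2v]
      push_cast
      ring
    rw [ha, hb]
  rw [hsum1, hge]
  have hgq : ((E' + 1 - V' : ℕ) : ℤ) = (E' : ℤ) + 1 - (V' : ℤ) := by
    push_cast [hVE]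
    ring
  rw [hgq]
  have hEc : ((Nat.card G.E : ℕ) : ℤ) = (vert : ℤ) + (m : ℤ) * (E' : ℤ) := by
    rw [hE]; push_cast; ring
  rw [hEc]
  ring

end GraphAction
section GroupTheory

lemma sylow_unique_normal {G : Type} [Group G] [Finite G] {p : ℕ} [Fact p.Prime]
    (P : Sylow p G) (h : Nat.card (Sylow p G) = 1) : (↑P : Subgroup G).Normal := by
  haveI : Subsingleton (Sylow p G) := (Nat.card_eq_one_iff_unique.mp h).1
  rw [← Subgroup.normalizer_eq_top_iff, eq_top_iff]
  intro g _
  exact (Sylow.smul_eq_iff_mem_normalizer).mp (Subsingleton.elim _ _)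

lemma card_map_dvd {G H : Type} [Group G] [Group H] [Finite G] (f : G →* H)
    (T : Subgroup G) : Nat.card ↥(T.map f) ∣ Nat.card ↥T :=
  Subgroup.card_dvd_of_surjective (f.subgroupMap T) (f.subgroupMap_surjective T)

/-- In a group of order `6p` with `p > 6` prime, `3 ∤ p - 1`, every subgroup
of order 3 is normal. -/
lemma order_three_normal {Γ : Type} [Group Γ] [Finite Γ] {p : ℕ} (hp : p.Prime)
    (hp6 : 6 < p) (hp3 : ¬ (3 ∣ p - 1)) (hcard : Nat.card Γ = 6 * p)
    (St : Subgroup Γ) (hSt : Nat.card ↥St = 3) : St.Normal := by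
  classical
  haveI : Fact p.Prime := ⟨hp⟩
  haveI : Fact (Nat.Prime 3) := ⟨by norm_num⟩
  have hp0 : p ≠ 0 := hp.ne_zero
  have hp3' : p ≠ 3 := by omega
  have h3p : ¬ (3 ∣ p) := by
    intro h
    rcases (Nat.Prime.eq_one_or_self_of_dvd hp 3 h) with h' | h' <;> omega
  -- Sylow p is normal
  obtain ⟨P⟩ : Nonempty (Sylow p Γ) := inferInstance
  have hPcard : Nat.card ↥(P : Subgroup Γ) = p := by
    rw [Sylow.card_eq_multiplicity, hcard]
    have hpd : ¬ p ∣ 6 := fun h => absurd (Nat.le_of_dvd (by norm_num) h) (by omega)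
    rw [Nat.factorization_mul (by norm_num) hp0, Finsupp.add_apply,
      Nat.factorization_eq_zero_of_not_dvd hpd, hp.factorization_self]
    norm_num
  have hPindex : (P : Subgroup Γ).index = 6 := by
    have h := Subgroup.card_mul_index (P : Subgroup Γ)
    rw [hPcard, hcard] at h
    rw [mul_comm 6 p] at h
    exact Nat.eq_of_mul_eq_mul_left hp.pos h
  have hnp : Nat.card (Sylow p Γ) = 1 := by
    have hdvd : Nat.card (Sylow p Γ) ∣ 6 := by
      have := P.card_dvd_index
      rwa [hPindex] at this
    have hle : Nat.card (Sylow p Γ) ≤ 6 := Nat.le_of_dvd (by norm_num) hdvd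
    have hmod := card_sylow_modEq_one p Γ
    have h1p : 1 % p = 1 := Nat.mod_eq_of_lt (by omega)
    have h2 : Nat.card (Sylow p Γ) % p = 1 := by rw [← h1p]; exact hmod
    rwa [Nat.mod_eq_of_lt (by omega)] at h2
  haveI hPnormal : (P : Subgroup Γ).Normal := sylow_unique_normal P hnp
  -- quotient of order 6, with normal Sylow 3
  have hcardQ6 : Nat.card (Γ ⧸ (P : Subgroup Γ)) = 6 := hPindex
  haveI : Finite (Γ ⧸ (P : Subgroup Γ)) := Nat.finite_of_card_ne_zero (by omega)
  obtain ⟨S3⟩ : Nonempty (Sylow 3 (Γ ⧸ (P : Subgroup Γ))) := inferInstance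
  have h63 : (6 : ℕ).factorization 3 = 1 := by
    rw [show (6 : ℕ) = 2 * 3 from rfl, Nat.factorization_mul (by norm_num) (by norm_num),
      Finsupp.add_apply, Nat.factorization_eq_zero_of_not_dvd (by norm_num),
      Nat.Prime.factorization_self (by norm_num)]
  have hS3card : Nat.card ↥(S3 : Subgroup (Γ ⧸ (P : Subgroup Γ))) = 3 := by
    rw [Sylow.card_eq_multiplicity, hcardQ6, h63, pow_one]
  have hS3index : (S3 : Subgroup (Γ ⧸ (P : Subgroup Γ))).index = 2 := by
    have h := Subgroup.card_mul_index (S3 : Subgroup (Γ ⧸ (P : Subgroup Γ)))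
    rw [hS3card, hcardQ6] at h
    omega
  have hn3 : Nat.card (Sylow 3 (Γ ⧸ (P : Subgroup Γ))) = 1 := by
    have hdvd : Nat.card (Sylow 3 (Γ ⧸ (P : Subgroup Γ))) ∣ 2 := by
      have := S3.card_dvd_index
      rwa [hS3index] at this
    have hmod := card_sylow_modEq_one 3 (Γ ⧸ (P : Subgroup Γ))
    have hle : Nat.card (Sylow 3 (Γ ⧸ (P : Subgroup Γ))) ≤ 2 := Nat.le_of_dvd (by norm_num) hdvd
    have hpos : 0 < Nat.card (Sylow 3 (Γ ⧸ (P : Subgroup Γ))) := Nat.card_pos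
    have h2 : Nat.card (Sylow 3 (Γ ⧸ (P : Subgroup Γ))) % 3 = 1 % 3 := hmod
    omega
  haveI hS3normal : (S3 : Subgroup (Γ ⧸ (P : Subgroup Γ))).Normal := sylow_unique_normal S3 hn3
  set π := QuotientGroup.mk' (P : Subgroup Γ) with hπ
  set N := Subgroup.comap π (S3 : Subgroup (Γ ⧸ (P : Subgroup Γ))) with hN
  haveI hNnormal : N.Normal := Subgroup.normal_comap π
  have hNindex : N.index = 2 := by
    rw [hN, Subgroup.index_comap_of_surjective _ (QuotientGroup.mk'_surjective _), hS3index]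
  have hNcard : Nat.card ↥N = 3 * p := by
    have h := Subgroup.card_mul_index N
    rw [hNindex, hcard] at h
    omega
  -- every subgroup of order 3 is contained in N
  have hstle : ∀ T : Subgroup Γ, Nat.card ↥T = 3 → T ≤ N := by
    intro T hT
    have hker : π.ker = (P : Subgroup Γ) := QuotientGroup.ker_mk' _
    have hmapdvd : Nat.card ↥(T.map π) ∣ 3 := by rw [← hT]; exact card_map_dvd π T
    have hne1 : Nat.card ↥(T.map π) ≠ 1 := by
      intro h1
      have hbot : T.map π = ⊥ := Subgroup.card_eq_one.mp h1
      have hle : T ≤ π.ker := (Subgroup.map_eq_bot_iff T).mp hbot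
      rw [hker] at hle
      have hdvd : Nat.card ↥T ∣ Nat.card ↥(P : Subgroup Γ) := Subgroup.card_dvd_of_le hle
      rw [hT, hPcard] at hdvd
      exact h3p hdvd
    have hmc : Nat.card ↥(T.map π) = 3 := by
      rcases (Nat.Prime.eq_one_or_self_of_dvd (by norm_num : Nat.Prime 3) _ hmapdvd) with h | h
      · exact absurd h hne1
      · exact h
    have hmapeq : T.map π = (S3 : Subgroup (Γ ⧸ (P : Subgroup Γ))) := by
      have hcc : Nat.card ↥(T.map π) = 3 ^ (Nat.card (Γ ⧸ (P : Subgroup Γ))).factorization 3 := by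
        rw [hmc, hcardQ6, h63, pow_one]
      haveI : Subsingleton (Sylow 3 (Γ ⧸ (P : Subgroup Γ))) :=
        (Nat.card_eq_one_iff_unique.mp hn3).1
      have := Subsingleton.elim (Sylow.ofCard (T.map π) hcc) S3
      rw [← Sylow.coe_ofCard (T.map π) hcc, this]
    intro t ht
    show π t ∈ (S3 : Subgroup (Γ ⧸ (P : Subgroup Γ)))
    rw [← hmapeq]
    exact ⟨t, ht, rfl⟩
  -- Sylow 3 of N is unique
  have hNfact : (Nat.card ↥N).factorization 3 = 1 := by
    rw [hNcard, Nat.factorization_mul (by norm_num) hp0, Finsupp.add_apply,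
      Nat.Prime.factorization_self (by norm_num), Nat.factorization_eq_zero_of_not_dvd h3p]
  have hn3N : Nat.card (Sylow 3 ↥N) = 1 := by
    obtain ⟨SN⟩ : Nonempty (Sylow 3 ↥N) := inferInstance
    have hSNcard : Nat.card ↥(SN : Subgroup ↥N) = 3 := by
      rw [Sylow.card_eq_multiplicity, hNfact, pow_one]
    have hSNindex : (SN : Subgroup ↥N).index = p := by
      have h := Subgroup.card_mul_index (SN : Subgroup ↥N)
      rw [hSNcard, hNcard] at h
      omega
    have hdvd : Nat.card (Sylow 3 ↥N) ∣ p := by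
      have := SN.card_dvd_index
      rwa [hSNindex] at this
    have hmod := card_sylow_modEq_one 3 ↥N
    have h2 : Nat.card (Sylow 3 ↥N) % 3 = 1 % 3 := hmod
    rcases (Nat.Prime.eq_one_or_self_of_dvd hp _ hdvd) with h | h
    · exact h
    · exfalso
      rw [h] at h2
      omega
  haveI hsing : Subsingleton (Sylow 3 ↥N) := (Nat.card_eq_one_iff_unique.mp hn3N).1
  -- conclude normality of St
  have hStN : St ≤ N := hstle St hSt
  have hStN' : Nat.card ↥(St.subgroupOf N) = 3 := by
    rw [Nat.card_congr (Subgroup.subgroupOfEquivOfLe hStN).toEquiv, hSt]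
  have hccSt : Nat.card ↥(St.subgroupOf N) = 3 ^ (Nat.card ↥N).factorization 3 := by
    rw [hStN', hNfact, pow_one]
  constructor
  intro n hn g
  set T := Subgroup.map (MulAut.conj g).toMonoidHom St with hT
  have hTcard : Nat.card ↥T = 3 := by
    rw [hT, ← Nat.card_congr (Subgroup.equivMapOfInjective St _
      (MulAut.conj g).injective).toEquiv, hSt]
  have hTN : T ≤ N := hstle T hTcard
  have hccT : Nat.card ↥(T.subgroupOf N) = 3 ^ (Nat.card ↥N).factorization 3 := by
    rw [Nat.card_congr (Subgroup.subgroupOfEquivOfLe hTN).toEquiv, hTcard, hNfact, pow_one]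
  have hsyl := Subsingleton.elim (Sylow.ofCard (T.subgroupOf N) hccT)
    (Sylow.ofCard (St.subgroupOf N) hccSt)
  have hsub : T.subgroupOf N = St.subgroupOf N := by
    rw [← Sylow.coe_ofCard (T.subgroupOf N) hccT, hsyl, Sylow.coe_ofCard]
  have hTSt : T = St := by
    have := Subgroup.subgroupOf_inj.mp hsub
    rwa [inf_of_le_left hTN, inf_of_le_left hStN] at this
  have : g * n * g⁻¹ ∈ T := ⟨n, hn, rfl⟩
  rwa [hTSt] at this

end GroupTheory
namespace GraphAction

variable {Γ : Type} [Group Γ] {G : Multigraph}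

lemma card_le_of_harmonic (A : GraphAction Γ G) (hh : A.ActsHarmonically)
    {p : ℕ} (hp : p.Prime) (hp6 : 6 < p) (hgcd : Nat.gcd ((p - 1) / 2) 6 = 1)
    (hgen : G.genus = (p : ℤ) + 1) : Nat.card Γ ≤ 4 * p := by
  classical
  haveI : Finite Γ := A.finite_gamma
  by_contra hlt
  push_neg at hlt
  have hgen1 : G.genus - 1 = (p : ℤ) := by rw [hgen]; ring
  -- Riemann-Hurwitz for the full group
  obtain ⟨gq, heq⟩ := A.rh hh ⊤
  rw [hgen1] at heq
  have htop : Nat.card ↥(⊤ : Subgroup Γ) = Nat.card Γ := Subgroup.card_top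
  have hnat : 2 * p + 2 * Nat.card ↥(⊤ : Subgroup Γ) = 2 * Nat.card ↥(⊤ : Subgroup Γ) * gq +
      ∑ y : A.quotV ⊤, (2 * (Nat.card ↥(⊤ : Subgroup Γ) - A.oV ⊤ y) + A.oV ⊤ y * A.vM ⊤ y) := by
    exact_mod_cast heq
  have hmain := arith_main (Nat.card ↥(⊤ : Subgroup Γ)) p gq (A.oV ⊤) (A.r ⊤) (A.vM ⊤)
    (by omega) (by omega) (A.oV_mul_r ⊤) (A.r_pos ⊤) (A.r_dvd_vM ⊤ hh) hnat
  obtain ⟨hm6, y₀, hr3⟩ := hmain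
  rw [htop] at hm6
  -- the vertex with stabilizer of order 3
  set x₀ := Quotient.out y₀ with hx₀
  set St := A.stabSub x₀ with hSt
  have hcardSt : Nat.card ↥St = 3 := by
    rw [← hr3]
    refine (Nat.card_congr ⟨fun s => ⟨s.1, s.2.2⟩, fun t => ⟨t.1, trivial, t.2⟩, ?_, ?_⟩).symm <;>
      (intro z; rfl)
  have hp3 : ¬ (3 ∣ p - 1) := by
    intro h3
    have hodd : p % 2 = 1 := Nat.odd_iff.mp (hp.odd_of_ne_two (by omega))
    have hk : 3 ∣ (p - 1) / 2 := by omega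
    have : (3 : ℕ) ∣ Nat.gcd ((p - 1) / 2) 6 := Nat.dvd_gcd hk (by norm_num)
    rw [hgcd] at this
    omega
  have hnormal : St.Normal := order_three_normal hp hp6 hp3 hm6 St hcardSt
  -- all vertices in the orbit of x₀ are fixed by St
  have hfix : ∀ x : G.V, Quotient.mk (A.vSetoid ⊤) x = y₀ → ∀ δ ∈ St, A.actV δ x = x := by
    intro x hx δ hδ
    obtain ⟨γ, -, hγ⟩ := Quotient.exact (hx.trans (Quotient.out_eq y₀).symm)
    have hxx : x = A.actV γ⁻¹ x₀ := by rw [hx₀, ← hγ, A.actV_inv_actV]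
    have hconj : γ * δ * γ⁻¹ ∈ St := hnormal.conj_mem δ hδ γ
    have h1 : A.actV (γ * δ * γ⁻¹) x₀ = x₀ := hconj
    have h2 : A.actV γ (A.actV δ (A.actV γ⁻¹ x₀)) = x₀ := by
      have hcomp : A.actV (γ * δ * γ⁻¹) x₀ = A.actV γ (A.actV δ (A.actV γ⁻¹ x₀)) := by
        rw [map_mul, map_mul]
        simp [Equiv.Perm.mul_apply]
      rw [← hcomp, h1]
    have h3 := congrArg (A.actV γ⁻¹) h2
    rw [A.actV_inv_actV] at h3
    rw [hxx, h3]
  -- orbit size is 2p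
  have horb : A.oV ⊤ y₀ = 2 * p := by
    have h := A.oV_mul_r ⊤ y₀
    rw [hr3, htop, hm6] at h
    omega
  -- Riemann-Hurwitz for St
  obtain ⟨gq', heq'⟩ := A.rh hh St
  rw [hgen1, hcardSt] at heq'
  have hnat' : 2 * p + 2 * 3 = 2 * 3 * gq' +
      ∑ y : A.quotV St, (2 * (3 - A.oV St y) + A.oV St y * A.vM St y) := by
    exact_mod_cast heq'
  -- the injection from the orbit of x₀ into quotV St
  set D := {x : G.V // Quotient.mk (A.vSetoid ⊤) x = y₀} with hD
  set J : D → A.quotV St := fun x => Quotient.mk (A.vSetoid St) x.1 with hJ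
  have hJinj : Function.Injective J := by
    intro x x' hxx
    obtain ⟨δ, hδ, hδx⟩ := Quotient.exact hxx
    have := hfix x.1 x.2 δ hδ
    rw [this] at hδx
    exact Subtype.ext hδx
  have hfib : ∀ (x : D) (z : G.V), Quotient.mk (A.vSetoid St) z = J x → z = x.1 := by
    intro x z hz
    obtain ⟨δ, hδ, hδx⟩ := Quotient.exact hz
    have h2 : A.vrel St x.1 z := (A.vSetoid St).symm ⟨δ, hδ, hδx⟩
    obtain ⟨δ', hδ', hδ'x⟩ := h2
    rw [hfix x.1 x.2 δ' hδ'] at hδ'x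
    exact hδ'x.symm
  have hoV1 : ∀ x : D, A.oV St (J x) = 1 := by
    intro x
    rw [oV, Nat.card_eq_one_iff_unique]
    exact ⟨⟨fun a b => Subtype.ext ((hfib x a.1 a.2).trans (hfib x b.1 b.2).symm)⟩,
      ⟨⟨x.1, rfl⟩⟩⟩
  have hout : ∀ x : D, Quotient.out (J x) = x.1 := fun x =>
    hfib x (Quotient.out (J x)) (Quotient.out_eq _)
  have hr3' : ∀ x : D, A.r St (J x) = 3 := by
    intro x
    rw [r, stabOrder, ← hcardSt]
    refine Nat.card_congr ⟨fun s => ⟨s.1, s.2.1⟩, fun t => ⟨t.1, t.2, ?_⟩, ?_, ?_⟩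
    · rw [hout x]
      exact hfix x.1 x.2 t.1 t.2
    · intro z; rfl
    · intro z; rfl
  -- bound the sum below
  set cS : A.quotV St → ℕ := fun y => 2 * (3 - A.oV St y) + A.oV St y * A.vM St y with hcS
  have hc4 : ∀ x : D, 4 ≤ cS (J x) := by
    intro x
    rw [hcS]
    simp only
    rw [hoV1 x]
    omega
  haveI : Fintype D := Fintype.ofFinite _
  set Timg : Finset (A.quotV St) := Finset.univ.image J with hTimg
  have hcardT : Timg.card = 2 * p := by
    rw [hTimg, Finset.card_image_of_injective _ hJinj, Finset.card_univ, ← horb]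
    rw [oV, Nat.card_eq_fintype_card]
  have hsumT : Timg.card * 4 ≤ ∑ y ∈ Timg, cS y := by
    have := Finset.card_nsmul_le_sum Timg cS 4 (by
      intro y hy
      obtain ⟨x, -, rfl⟩ := Finset.mem_image.mp hy
      exact hc4 x)
    simpa [smul_eq_mul] using this
  have hsub : ∑ y ∈ Timg, cS y ≤ ∑ y : A.quotV St, cS y :=
    Finset.sum_le_sum_of_subset (Finset.subset_univ Timg)
  have hfin : ∑ y : A.quotV St, cS y = ∑ y : A.quotV St,
      (2 * (3 - A.oV St y) + A.oV St y * A.vM St y) := rfl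
  rw [hcardT] at hsumT
  rw [← hfin] at hnat'
  omega

end GraphAction
section Construction

variable {Γ : Type} [Group Γ]

/-- The key coset-counting bijection for harmonicity of coset graphs. -/
lemma coset_count_eq (Δ A' : Subgroup Γ) (γ : Γ) {e₁ δ₀ a₀ : Γ} (hδ₀ : δ₀ ∈ Δ)
    (ha₀ : a₀ ∈ A') (he₁ : e₁ = δ₀ * γ * a₀) :
    Nat.card {e : Γ // γ⁻¹ * e ∈ A' ∧ e₁ * e⁻¹ ∈ Δ} =
    Nat.card {t : Γ // t ∈ Δ ∧ γ⁻¹ * t * γ ∈ A'} := by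
  subst he₁
  refine Nat.card_congr ⟨fun e => ⟨δ₀⁻¹ * (δ₀ * γ * a₀) * (e : Γ)⁻¹, ?_, ?_⟩,
    fun t => ⟨(t : Γ)⁻¹ * δ₀⁻¹ * (δ₀ * γ * a₀), ?_, ?_⟩, ?_, ?_⟩
  · rw [show δ₀⁻¹ * (δ₀ * γ * a₀) * (e : Γ)⁻¹ = δ₀⁻¹ * (δ₀ * γ * a₀ * (e : Γ)⁻¹) from by group]
    exact Δ.mul_mem (Δ.inv_mem hδ₀) e.2.2
  · rw [show γ⁻¹ * (δ₀⁻¹ * (δ₀ * γ * a₀) * (e : Γ)⁻¹) * γ = a₀ * (γ⁻¹ * (e : Γ))⁻¹ from by group]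
    exact A'.mul_mem ha₀ (A'.inv_mem e.2.1)
  · rw [show γ⁻¹ * ((t : Γ)⁻¹ * δ₀⁻¹ * (δ₀ * γ * a₀)) = (γ⁻¹ * (t : Γ) * γ)⁻¹ * a₀ from by group]
    exact A'.mul_mem (A'.inv_mem t.2.2) ha₀
  · rw [show (δ₀ * γ * a₀) * ((t : Γ)⁻¹ * δ₀⁻¹ * (δ₀ * γ * a₀))⁻¹ = δ₀ * (t : Γ) from by group]
    exact Δ.mul_mem hδ₀ t.2.1
  · intro e
    refine Subtype.ext ?_
    show (δ₀⁻¹ * (δ₀ * γ * a₀) * (e : Γ)⁻¹)⁻¹ * δ₀⁻¹ * (δ₀ * γ * a₀) = (e : Γ)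
    group
  · intro t
    refine Subtype.ext ?_
    show δ₀⁻¹ * (δ₀ * γ * a₀) * ((t : Γ)⁻¹ * δ₀⁻¹ * (δ₀ * γ * a₀))⁻¹ = (t : Γ)
    group

variable (Γ) [Fintype Γ] (A B : Subgroup Γ)

/-- The bipartite coset graph on `Γ/A ⊔ Γ/B` with edge set `Γ`. -/
noncomputable def cosetGraph (hgen : Subgroup.closure ((A : Set Γ) ∪ (B : Set Γ)) = ⊤) :
    Multigraph where
  V := (Γ ⧸ A) ⊕ (Γ ⧸ B)
  E := Γ
  fintypeV := by classical exact inferInstance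
  fintypeE := inferInstance
  ends γ := s(Sum.inl (QuotientGroup.mk γ), Sum.inr (QuotientGroup.mk γ))
  loopless e := by simp [Sym2.mk_isDiag_iff]
  connected := by
    classical
    rw [SimpleGraph.connected_iff]
    refine ⟨?_, ⟨Sum.inl (QuotientGroup.mk 1)⟩⟩
    set Gs := SimpleGraph.fromRel fun x y : (Γ ⧸ A) ⊕ (Γ ⧸ B) =>
      ∃ e : Γ, s(Sum.inl (QuotientGroup.mk e), Sum.inr (QuotientGroup.mk e)) = s(x, y)
      with hGs
    show Gs.Preconnected
    have adjAB : ∀ g : Γ,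
        Gs.Adj (Sum.inl (QuotientGroup.mk g)) (Sum.inr (QuotientGroup.mk g)) := by
      intro g
      exact ⟨by simp, Or.inl ⟨g, rfl⟩⟩
    have main : ∀ (y : Γ), y ∈ (A : Set Γ) ∪ (B : Set Γ) → ∀ x : Γ,
        Gs.Reachable (Sum.inl (QuotientGroup.mk 1)) (Sum.inl (QuotientGroup.mk x)) →
        Gs.Reachable (Sum.inl (QuotientGroup.mk 1)) (Sum.inl (QuotientGroup.mk (x * y))) := by
      rintro y (hy | hy) x hx
      · have hmk : (QuotientGroup.mk (x * y) : Γ ⧸ A) = QuotientGroup.mk x := by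
          rw [QuotientGroup.eq]
          rw [show (x * y)⁻¹ * x = y⁻¹ from by group]
          exact A.inv_mem hy
        rwa [hmk]
      · have hmkB : (QuotientGroup.mk (x * y) : Γ ⧸ B) = QuotientGroup.mk x := by
          rw [QuotientGroup.eq]
          rw [show (x * y)⁻¹ * x = y⁻¹ from by group]
          exact B.inv_mem hy
        refine hx.trans ((adjAB x).reachable.trans ?_)
        rw [← hmkB]
        exact ((adjAB (x * y)).symm).reachable
    have key : ∀ g : Γ, Gs.Reachable (Sum.inl (QuotientGroup.mk 1))
        (Sum.inl (QuotientGroup.mk g)) := by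
      intro g
      have hg : g ∈ Subgroup.closure ((A : Set Γ) ∪ (B : Set Γ)) := by rw [hgen]; trivial
      exact Subgroup.closure_induction_right
        (p := fun x _ => Gs.Reachable (Sum.inl (QuotientGroup.mk 1))
          (Sum.inl (QuotientGroup.mk x)))
        (SimpleGraph.Reachable.refl _)
        (fun x hx y hy ih => main y hy x ih)
        (fun x hx y hy ih => main y⁻¹ (by
          rcases hy with hy | hy
          · exact Or.inl (A.inv_mem hy)
          · exact Or.inr (B.inv_mem hy)) x ih) hg
    have keyAll : ∀ w : (Γ ⧸ A) ⊕ (Γ ⧸ B),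
        Gs.Reachable (Sum.inl (QuotientGroup.mk 1)) w := by
      intro w
      cases w with
      | inl q =>
        obtain ⟨g, rfl⟩ := QuotientGroup.mk_surjective q
        exact key g
      | inr q =>
        obtain ⟨g, rfl⟩ := QuotientGroup.mk_surjective q
        exact (key g).trans (adjAB g).reachable
    intro u v
    exact (keyAll u).symm.trans (keyAll v)

/-- The left-multiplication action of `Γ` on its coset graph. -/
noncomputable def cosetAction (hgen : Subgroup.closure ((A : Set Γ) ∪ (B : Set Γ)) = ⊤) :
    GraphAction Γ (cosetGraph Γ A B hgen) where
  actV := by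
    classical
    exact (Equiv.Perm.sumCongrHom _ _).comp
      ((MulAction.toPermHom Γ (Γ ⧸ A)).prod (MulAction.toPermHom Γ (Γ ⧸ B)))
  actE := MulAction.toPermHom Γ Γ
  ends_map := by
    intro γ e
    rfl
  faithful := by
    intro γ _ hE
    have := hE (show (cosetGraph Γ A B hgen).E from (1 : Γ))
    have h1 : γ * 1 = 1 := this
    rwa [mul_one] at h1

lemma cosetAction_actV_inl (hgen : Subgroup.closure ((A : Set Γ) ∪ (B : Set Γ)) = ⊤)
    (δ : Γ) (q : Γ ⧸ A) :
    (cosetAction Γ A B hgen).actV δ (Sum.inl q) = Sum.inl (δ • q) := rfl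

lemma cosetAction_actV_inr (hgen : Subgroup.closure ((A : Set Γ) ∪ (B : Set Γ)) = ⊤)
    (δ : Γ) (q : Γ ⧸ B) :
    (cosetAction Γ A B hgen).actV δ (Sum.inr q) = Sum.inr (δ • q) := rfl

lemma cosetAction_actE (hgen : Subgroup.closure ((A : Set Γ) ∪ (B : Set Γ)) = ⊤)
    (δ e : Γ) : (cosetAction Γ A B hgen).actE δ e = δ * e := rfl

lemma cosetGraph_ends (hgen : Subgroup.closure ((A : Set Γ) ∪ (B : Set Γ)) = ⊤)
    (e : Γ) : (cosetGraph Γ A B hgen).ends e =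
      s(Sum.inl (QuotientGroup.mk e), Sum.inr (QuotientGroup.mk e)) := rfl

lemma cosetAction_harmonic (hgen : Subgroup.closure ((A : Set Γ) ∪ (B : Set Γ)) = ⊤) :
    (cosetAction Γ A B hgen).ActsHarmonically := by
  classical
  intro Δ
  constructor
  · -- harmonic
    intro x e₁ e₂ hnv1 hnv2 hv1 hv2
    cases x with
    | inl q =>
      obtain ⟨γ, rfl⟩ := QuotientGroup.mk_surjective q
      have hmem : ∀ e f : Γ,
          (Sum.inl (QuotientGroup.mk γ) ∈ (cosetGraph Γ A B hgen).ends e ∧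
            (cosetAction Γ A B hgen).erel Δ e f) ↔ (γ⁻¹ * e ∈ A ∧ f * e⁻¹ ∈ Δ) := by
        intro e f
        constructor
        · rintro ⟨h1, δ, hδ, h2⟩
          rw [cosetGraph_ends] at h1
          have h1' : (QuotientGroup.mk γ : Γ ⧸ A) = QuotientGroup.mk e := by
            rcases Sym2.mem_iff.mp h1 with h | h
            · exact Sum.inl.inj h
            · exact absurd h (by simp)
          rw [cosetAction_actE] at h2
          refine ⟨QuotientGroup.eq.mp h1', ?_⟩
          rw [show f * e⁻¹ = δ from by rw [← h2]; group]
          exact hδ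
        · rintro ⟨h1, h2⟩
          refine ⟨?_, f * e⁻¹, h2, ?_⟩
          · rw [cosetGraph_ends, QuotientGroup.eq.mpr h1]
            exact Sym2.mem_mk_left _ _
          · rw [cosetAction_actE]
            simp
            rfl
      have hdec : ∀ f : Γ, (∃ v ∈ (cosetGraph Γ A B hgen).ends f,
          (cosetAction Γ A B hgen).vrel Δ (Sum.inl (QuotientGroup.mk γ)) v) →
          ∃ δ₀ ∈ Δ, ∃ a₀ ∈ A, f = δ₀ * γ * a₀ := by
        rintro f ⟨v, hv, δ, hδ, hδv⟩
        rw [cosetGraph_ends] at hv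
        rw [cosetAction_actV_inl] at hδv
        rcases Sym2.mem_iff.mp hv with rfl | rfl
        · have h1 : (QuotientGroup.mk (δ * γ) : Γ ⧸ A) = QuotientGroup.mk f :=
            Sum.inl.inj hδv
          have ha : (δ * γ)⁻¹ * f ∈ A := QuotientGroup.eq.mp h1
          exact ⟨δ, hδ, (δ * γ)⁻¹ * f, ha, by group⟩
        · exact absurd hδv (by simp)
      obtain ⟨δ₁, hδ₁, a₁, ha₁, he₁⟩ := hdec e₁ hv1
      obtain ⟨δ₂, hδ₂, a₂, ha₂, he₂⟩ := hdec e₂ hv2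
      show Nat.card {e : Γ // Sum.inl (QuotientGroup.mk γ) ∈ (cosetGraph Γ A B hgen).ends e ∧
          (cosetAction Γ A B hgen).erel Δ e e₁} = Nat.card {e : Γ //
          Sum.inl (QuotientGroup.mk γ) ∈ (cosetGraph Γ A B hgen).ends e ∧
          (cosetAction Γ A B hgen).erel Δ e e₂}
      rw [Nat.card_congr (Equiv.subtypeEquivRight (fun e => hmem e e₁)),
        Nat.card_congr (Equiv.subtypeEquivRight (fun e => hmem e e₂)),
        coset_count_eq Δ A γ hδ₁ ha₁ he₁, coset_count_eq Δ A γ hδ₂ ha₂ he₂]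
    | inr q =>
      obtain ⟨γ, rfl⟩ := QuotientGroup.mk_surjective q
      have hmem : ∀ e f : Γ,
          (Sum.inr (QuotientGroup.mk γ) ∈ (cosetGraph Γ A B hgen).ends e ∧
            (cosetAction Γ A B hgen).erel Δ e f) ↔ (γ⁻¹ * e ∈ B ∧ f * e⁻¹ ∈ Δ) := by
        intro e f
        constructor
        · rintro ⟨h1, δ, hδ, h2⟩
          rw [cosetGraph_ends] at h1
          have h1' : (QuotientGroup.mk γ : Γ ⧸ B) = QuotientGroup.mk e := by
            rcases Sym2.mem_iff.mp h1 with h | h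
            · exact absurd h (by simp)
            · exact Sum.inr.inj h
          rw [cosetAction_actE] at h2
          refine ⟨QuotientGroup.eq.mp h1', ?_⟩
          rw [show f * e⁻¹ = δ from by rw [← h2]; group]
          exact hδ
        · rintro ⟨h1, h2⟩
          refine ⟨?_, f * e⁻¹, h2, ?_⟩
          · rw [cosetGraph_ends, QuotientGroup.eq.mpr h1]
            exact Sym2.mem_mk_right _ _
          · rw [cosetAction_actE]
            simp
            rfl
      have hdec : ∀ f : Γ, (∃ v ∈ (cosetGraph Γ A B hgen).ends f,
          (cosetAction Γ A B hgen).vrel Δ (Sum.inr (QuotientGroup.mk γ)) v) →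
          ∃ δ₀ ∈ Δ, ∃ b₀ ∈ B, f = δ₀ * γ * b₀ := by
        rintro f ⟨v, hv, δ, hδ, hδv⟩
        rw [cosetGraph_ends] at hv
        rw [cosetAction_actV_inr] at hδv
        rcases Sym2.mem_iff.mp hv with rfl | rfl
        · exact absurd hδv (by simp)
        · have h1 : (QuotientGroup.mk (δ * γ) : Γ ⧸ B) = QuotientGroup.mk f :=
            Sum.inr.inj hδv
          have hb : (δ * γ)⁻¹ * f ∈ B := QuotientGroup.eq.mp h1
          exact ⟨δ, hδ, (δ * γ)⁻¹ * f, hb, by group⟩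
      obtain ⟨δ₁, hδ₁, b₁, hb₁, he₁⟩ := hdec e₁ hv1
      obtain ⟨δ₂, hδ₂, b₂, hb₂, he₂⟩ := hdec e₂ hv2
      show Nat.card {e : Γ // Sum.inr (QuotientGroup.mk γ) ∈ (cosetGraph Γ A B hgen).ends e ∧
          (cosetAction Γ A B hgen).erel Δ e e₁} = Nat.card {e : Γ //
          Sum.inr (QuotientGroup.mk γ) ∈ (cosetGraph Γ A B hgen).ends e ∧
          (cosetAction Γ A B hgen).erel Δ e e₂}
      rw [Nat.card_congr (Equiv.subtypeEquivRight (fun e => hmem e e₁)),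
        Nat.card_congr (Equiv.subtypeEquivRight (fun e => hmem e e₂)),
        coset_count_eq Δ B γ hδ₁ hb₁ he₁, coset_count_eq Δ B γ hδ₂ hb₂ he₂]
  · -- non-degenerate
    intro x
    cases x with
    | inl q =>
      obtain ⟨γ, rfl⟩ := QuotientGroup.mk_surjective q
      refine ⟨γ, Sym2.mem_mk_left _ _, Sum.inr (QuotientGroup.mk γ), Sym2.mem_mk_right _ _, ?_⟩
      rintro ⟨δ, hδ, h⟩
      rw [cosetAction_actV_inl] at h
      exact absurd h (by simp)
    | inr q =>
      obtain ⟨γ, rfl⟩ := QuotientGroup.mk_surjective q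
      refine ⟨γ, Sym2.mem_mk_right _ _, Sum.inl (QuotientGroup.mk γ), Sym2.mem_mk_left _ _, ?_⟩
      rintro ⟨δ, hδ, h⟩
      rw [cosetAction_actV_inr] at h
      exact absurd h (by simp)

lemma cosetGraph_genus (hgen : Subgroup.closure ((A : Set Γ) ∪ (B : Set Γ)) = ⊤) :
    (cosetGraph Γ A B hgen).genus =
      (Fintype.card Γ : ℤ) - A.index - B.index + 1 := by
  classical
  have hV : Fintype.card ((Γ ⧸ A) ⊕ (Γ ⧸ B)) = A.index + B.index := by
    rw [Fintype.card_sum]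
    have h1 : Fintype.card (Γ ⧸ A) = A.index := by
      rw [← Nat.card_eq_fintype_card]; rfl
    have h2 : Fintype.card (Γ ⧸ B) = B.index := by
      rw [← Nat.card_eq_fintype_card]; rfl
    rw [h1, h2]
  have hgenus : (cosetGraph Γ A B hgen).genus =
      (Fintype.card Γ : ℤ) - (Fintype.card ((Γ ⧸ A) ⊕ (Γ ⧸ B)) : ℤ) + 1 := by
    rfl
  rw [hgenus, hV]
  push_cast
  ring

end Construction

section Dihedral

open DihedralGroup

variable (p : ℕ)

/-- The Klein four-subgroup `{1, r^p, s, s r^p}` of the dihedral group of order `4p`. -/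
def dihB (hp1 : 1 ≤ p) : Subgroup (DihedralGroup (2 * p)) := by
  haveI : NeZero (2 * p) := ⟨by omega⟩
  have hpp : (p : ZMod (2 * p)) + (p : ZMod (2 * p)) = 0 := by
    rw [← Nat.cast_add, show p + p = 2 * p from by ring, ZMod.natCast_self]
  have hneg : -(p : ZMod (2 * p)) = (p : ZMod (2 * p)) := by linear_combination -hpp
  exact
  { carrier := {1, r (p : ZMod (2 * p)), sr 0, sr (p : ZMod (2 * p))}
    one_mem' := by left; rfl
    mul_mem' := by
      intro a b ha hb
      simp only [Set.mem_insert_iff, Set.mem_singleton_iff] at ha hb ⊢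
      rcases ha with rfl | rfl | rfl | rfl <;> rcases hb with rfl | rfl | rfl | rfl <;>
        simp [r_mul_r, r_mul_sr, sr_mul_r, sr_mul_sr, hpp, hneg, zero_sub,
          sub_zero, sub_self, add_zero, zero_add]
    inv_mem' := by
      intro a ha
      simp only [Set.mem_insert_iff, Set.mem_singleton_iff] at ha ⊢
      rcases ha with rfl | rfl | rfl | rfl
      · left; simp
      · right; left
        show (r (p : ZMod (2 * p)))⁻¹ = r (p : ZMod (2 * p))
        show r (-(p : ZMod (2 * p))) = r (p : ZMod (2 * p))
        rw [hneg]
      · right; right; left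
        rfl
      · right; right; right
        rfl }

lemma dihB_card (hp1 : 1 ≤ p) : Nat.card ↥(dihB p hp1) = 4 := by
  haveI : NeZero (2 * p) := ⟨by omega⟩
  have hp0 : (p : ZMod (2 * p)) ≠ 0 := by
    intro h
    rw [ZMod.natCast_eq_zero_iff] at h
    have := Nat.le_of_dvd (by omega) h
    omega
  have hcar : Nat.card ↥(dihB p hp1) = Nat.card
      ↑({1, r (p : ZMod (2 * p)), sr 0, sr (p : ZMod (2 * p))} : Set (DihedralGroup (2 * p))) :=
    Nat.card_congr (Equiv.subtypeEquivRight (fun x => Iff.rfl))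
  rw [hcar, Nat.card_coe_set_eq]
  rw [Set.ncard_insert_of_notMem (by
      simp only [Set.mem_insert_iff, Set.mem_singleton_iff, one_def]
      push_neg
      refine ⟨?_, ?_, ?_⟩ <;> simp [← r_zero, hp0, Ne.symm hp0]),
    Set.ncard_insert_of_notMem (by
      simp only [Set.mem_insert_iff, Set.mem_singleton_iff]
      push_neg
      exact ⟨by simp, by simp⟩),
    Set.ncard_insert_of_notMem (by simp [Ne.symm hp0]),
    Set.ncard_singleton]

lemma dih_gen (hp1 : 1 ≤ p) :
    Subgroup.closure (((Subgroup.zpowers (sr (1 : ZMod (2 * p)))) :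
        Set (DihedralGroup (2 * p))) ∪ (dihB p hp1 : Set (DihedralGroup (2 * p)))) = ⊤ := by
  haveI : NeZero (2 * p) := ⟨by omega⟩
  set C := Subgroup.closure (((Subgroup.zpowers (sr (1 : ZMod (2 * p)))) :
      Set (DihedralGroup (2 * p))) ∪ (dihB p hp1 : Set (DihedralGroup (2 * p)))) with hC
  rw [eq_top_iff]
  rintro g -
  have h0 : sr (0 : ZMod (2 * p)) ∈ C := Subgroup.subset_closure (Or.inr (by
    simp only [SetLike.mem_coe]
    right; right; left; rfl))
  have h1 : sr (1 : ZMod (2 * p)) ∈ C :=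
    Subgroup.subset_closure (Or.inl (Subgroup.mem_zpowers _))
  have hr1 : r (1 : ZMod (2 * p)) ∈ C := by
    have : sr (0 : ZMod (2 * p)) * sr 1 = r 1 := by rw [sr_mul_sr, sub_zero]
    rw [← this]
    exact C.mul_mem h0 h1
  have hr : ∀ k : ZMod (2 * p), r k ∈ C := by
    intro k
    have hpow : r (1 : ZMod (2 * p)) ^ k.val = r k := by
      rw [r_one_pow, ZMod.natCast_val, ZMod.cast_id]
    rw [← hpow]
    exact C.pow_mem hr1 _
  match g with
  | r k => exact hr k
  | sr k =>
    have : sr (0 : ZMod (2 * p)) * r k = sr k := by rw [sr_mul_r, zero_add]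
    rw [← this]
    exact C.mul_mem h0 (hr k)

end Dihedral

/-- The lower bound: a harmonic action of order `4p` on a graph of genus `p+1`. -/
lemma exists_harmonic_4p (p : ℕ) (hp1 : 1 ≤ p) :
    ∃ (Γ : Type) (i : Group Γ) (G : Multigraph) (A : @GraphAction Γ i G),
      @GraphAction.ActsHarmonically Γ i G A ∧ G.genus = ((p + 1 : ℕ) : ℤ) ∧
      Nat.card Γ = 4 * p := by
  classical
  haveI : NeZero (2 * p) := ⟨by omega⟩
  set SA := Subgroup.zpowers (DihedralGroup.sr (1 : ZMod (2 * p))) with hSA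
  set SB := dihB p hp1 with hSB
  have hgen := dih_gen p hp1
  have hcardΓ : Nat.card (DihedralGroup (2 * p)) = 4 * p := by
    rw [Nat.card_eq_fintype_card, DihedralGroup.card]
    ring
  have hcardA : Nat.card ↥SA = 2 := by
    rw [hSA, Nat.card_zpowers, DihedralGroup.orderOf_sr]
  have hcardB : Nat.card ↥SB = 4 := dihB_card p hp1
  have hidxA : SA.index = 2 * p := by
    have h := Subgroup.card_mul_index SA
    rw [hcardA, hcardΓ] at h
    omega
  have hidxB : SB.index = p := by
    have h := Subgroup.card_mul_index SB
    rw [hcardB, hcardΓ] at h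
    omega
  refine ⟨DihedralGroup (2 * p), inferInstance, cosetGraph (DihedralGroup (2 * p)) SA SB hgen,
    cosetAction (DihedralGroup (2 * p)) SA SB hgen,
    cosetAction_harmonic (DihedralGroup (2 * p)) SA SB hgen, ?_, hcardΓ⟩
  rw [cosetGraph_genus (DihedralGroup (2 * p)) SA SB hgen, hidxA, hidxB,
    ← Nat.card_eq_fintype_card, hcardΓ]
  push_cast
  ring

theorem M_eq_4p (p : ℕ) (hp : p.Prime) (hp6 : 6 < p)
    (hgcd : Nat.gcd ((p - 1) / 2) 6 = 1) : M (p + 1) = 4 * p := by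
  have hp1 : 1 ≤ p := hp.one_lt.le.trans' (by omega)
  have hmem : 4 * p ∈ {n : ℕ | ∃ (Γ : Type) (i : Group Γ) (G : Multigraph)
      (A : @GraphAction Γ i G), @GraphAction.ActsHarmonically Γ i G A ∧
      G.genus = ((p + 1 : ℕ) : ℤ) ∧ Nat.card Γ = n} := exists_harmonic_4p p (by omega)
  have hub : ∀ n ∈ {n : ℕ | ∃ (Γ : Type) (i : Group Γ) (G : Multigraph)
      (A : @GraphAction Γ i G), @GraphAction.ActsHarmonically Γ i G A ∧
      G.genus = ((p + 1 : ℕ) : ℤ) ∧ Nat.card Γ = n}, n ≤ 4 * p := by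
    rintro n ⟨Γ, i, G, A, hh, hgenus, hcard⟩
    have hgen' : G.genus = (p : ℤ) + 1 := by rw [hgenus]; push_cast; ring
    rw [← hcard]
    exact A.card_le_of_harmonic hh hp hp6 hgcd hgen'
  rw [M]
  exact le_antisymm (csSup_le ⟨4 * p, hmem⟩ hub) (le_csSup ⟨4 * p, hub⟩ hmem)


/-- There are infinitely many `g ≥ 2` with `M(g) = 4(g − 1)`; in
particular for every prime `p > 6` with `gcd((p − 1)/2, 6) = 1` one has
`M(p + 1) = 4p`. -/
theorem lower_bound_sharp :
    {g : ℕ | 2 ≤ g ∧ M g = 4 * (g - 1)}.Infinite ∧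
    ∀ p : ℕ, p.Prime → 6 < p → Nat.gcd ((p - 1) / 2) 6 = 1 → M (p + 1) = 4 * p := by
  constructor
  · have hdir : {q : ℕ | q.Prime ∧ (q : ZMod 12) = (11 : ZMod 12)}.Infinite :=
      Nat.infinite_setOf_prime_and_eq_mod (by decide)
    have himg : ((fun q => q + 1) ''
        {q : ℕ | q.Prime ∧ (q : ZMod 12) = (11 : ZMod 12)}).Infinite :=
      hdir.image (Function.Injective.injOn (add_left_injective 1))
    refine himg.mono ?_
    rintro g ⟨q, ⟨hq, hmod⟩, rfl⟩
    have hmod' : q % 12 = 11 := by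
      have h11 : ((11 : ℕ) : ZMod 12) = (11 : ZMod 12) := by norm_num
      rw [← h11] at hmod
      have h2 := (ZMod.natCast_eq_natCast_iff q 11 12).mp hmod
      simpa [Nat.ModEq] using h2
    have hq6 : 6 < q := by omega
    have hgcd : Nat.gcd ((q - 1) / 2) 6 = 1 := by
      have hrw : (q - 1) / 2 = 5 + (q / 12) * 6 := by omega
      rw [hrw, Nat.gcd_comm, Nat.gcd_add_mul_right_right 6 5 (q / 12)]
      decide
    have hbeta : (fun q => q + 1) q = q + 1 := rfl
    rw [hbeta]
    refine ⟨by omega, ?_⟩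
    rw [M_eq_4p q hq hq6 hgcd]
    omega
  · exact fun p hp hp6 hgcd => M_eq_4p p hp hp6 hgcd
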